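/- arXiv:1609.08353 — 4 statements merged into one kernel-verified Lean document; each statement's English description precedes it below -/
import Mathlib

section
/- Let A_{n,t} be the number of sequences a_1, ..., a_{2n} of nonnegative integers with a_1 = 1, a_{2n} = 0, |a_i - a_{i+1}| = 1 for all i, and a_i ≤ t for all i. Then A_{n,t} = Σ_{j≥0} [ binomial(2n, n - j(t+2)) - binomial(2n, n - j(t+2) - 1) - binomial(2n, n - j(t+2) - t - 1) + binomial(2n, n - (j+1)(t+2)) ], where binomial coefficients with negative lower index are zero. -/
open Finset Real Filter

/-- A Dyck-path sequence `a_1, …, a_{2n}` (with `a 0 = 0` and zero padding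
beyond index `2n` so that the set of such functions is finite):
`a 1 = 1`, `a (2n) = 0`, and consecutive values differ by exactly 1. -/
def IsDyckSeq (n : ℕ) (a : ℕ → ℕ) : Prop :=
  a 1 = 1 ∧ a (2*n) = 0 ∧
  (∀ i, 1 ≤ i → i < 2*n → (a (i+1) = a i + 1 ∨ a i = a (i+1) + 1)) ∧
  a 0 = 0 ∧ ∀ i, 2*n < i → a i = 0

/-- `A n t`: number of Dyck-path sequences of semilength `n` of height at most `t`,
with the convention `A 0 t = 1`. -/
noncomputable def A (n t : ℕ) : ℕ :=
  if n = 0 then 1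
  else Nat.card {a : ℕ → ℕ // IsDyckSeq n a ∧ ∀ i, a i ≤ t}

/-- `B n k`: number of Dyck-path sequences of semilength `n` of height at least `k`,
with the conventions `B 0 0 = 1`, `B 0 k = 0` for `k ≥ 1`. -/
noncomputable def B (n k : ℕ) : ℕ :=
  if n = 0 then (if k = 0 then 1 else 0)
  else Nat.card {a : ℕ → ℕ // IsDyckSeq n a ∧ ∃ i, k ≤ a i}

/-- The `n`-th Catalan number `C_n = (1/(n+1)) * binomial(2n, n)`. -/
def C (n : ℕ) : ℕ := (2*n).choose n / (n + 1)

/-- Binomial coefficient with integer lower index, zero when negative. -/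
def chooseZ (m : ℕ) (r : ℤ) : ℕ := if 0 ≤ r then m.choose r.toNat else 0

namespace Strip


lemma chooseZ_neg {m : ℕ} {r : ℤ} (h : r < 0) : chooseZ m r = 0 := by
  simp [chooseZ, not_le.2 h]

lemma chooseZ_gt {m : ℕ} {r : ℤ} (h : (m : ℤ) < r) : chooseZ m r = 0 := by
  have h0 : 0 ≤ r := le_of_lt (lt_of_le_of_lt (Int.ofNat_nonneg m) h)
  rw [chooseZ, if_pos h0]
  exact Nat.choose_eq_zero_of_lt (by omega)

lemma chooseZ_pascal (m : ℕ) (r : ℤ) :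
    chooseZ (m+1) r = chooseZ m (r-1) + chooseZ m r := by
  rcases lt_trichotomy r 0 with h | h | h
  · rw [chooseZ_neg h, chooseZ_neg h, chooseZ_neg (by omega)]
  · subst h
    rw [chooseZ_neg (by norm_num : (0:ℤ)-1 < 0)]
    simp [chooseZ]
  · have h0 : (0:ℤ) ≤ r := le_of_lt h
    have h1 : (0:ℤ) ≤ r - 1 := by omega
    rw [chooseZ, chooseZ, chooseZ, if_pos h0, if_pos h0, if_pos h1]
    have : r.toNat = (r-1).toNat + 1 := by omega
    rw [this, Nat.choose_succ_succ']

lemma chooseZ_symm (n : ℕ) (r : ℤ) :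
    chooseZ (2*n) ((n:ℤ) + r) = chooseZ (2*n) ((n:ℤ) - r) := by
  by_cases h1 : 0 ≤ (n:ℤ) + r
  · by_cases h2 : 0 ≤ (n:ℤ) - r
    · rw [chooseZ, chooseZ, if_pos h1, if_pos h2]
      have hb : ((n:ℤ) - r).toNat = 2*n - ((n:ℤ) + r).toNat := by omega
      have ha : ((n:ℤ) + r).toNat ≤ 2*n := by omega
      rw [hb, Nat.choose_symm ha]
    · rw [chooseZ_gt (by omega), chooseZ_neg (by omega)]
  · rw [chooseZ_neg (by omega), chooseZ_gt (by omega)]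

def gg (n : ℕ) (y : ℤ) : ℕ :=
  if ((n : ℤ) + y) % 2 = 0 then chooseZ n (((n : ℤ) + y) / 2) else 0

lemma gg_pascal (n : ℕ) (y : ℤ) : gg (n+1) y = gg n (y-1) + gg n (y+1) := by
  unfold gg
  push_cast
  by_cases h : ((n:ℤ) + 1 + y) % 2 = 0
  · have h1 : ((n:ℤ) + (y-1)) % 2 = 0 := by omega
    have h2 : ((n:ℤ) + (y+1)) % 2 = 0 := by omega
    rw [if_pos h, if_pos h1, if_pos h2]
    have e1 : ((n:ℤ) + (y-1))/2 = ((n:ℤ)+1+y)/2 - 1 := by omega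
    have e2 : ((n:ℤ) + (y+1))/2 = ((n:ℤ)+1+y)/2 := by omega
    rw [e1, e2, ← chooseZ_pascal]
  · have h1 : ¬ ((n:ℤ) + (y-1)) % 2 = 0 := by omega
    have h2 : ¬ ((n:ℤ) + (y+1)) % 2 = 0 := by omega
    rw [if_neg h, if_neg h1, if_neg h2]

lemma gg_eq_zero (n : ℕ) {y : ℤ} (h : (n:ℤ) < y ∨ y < -(n:ℤ)) : gg n y = 0 := by
  unfold gg
  split_ifs with hp
  · rcases h with h | h
    · exact chooseZ_gt (by omega)
    · exact chooseZ_neg (by omega)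
  · rfl

lemma gg_zero (y : ℤ) : gg 0 y = if y = 0 then 1 else 0 := by
  unfold gg chooseZ
  rcases eq_or_ne y 0 with rfl | hy
  · norm_num
  · rw [if_neg hy]
    split_ifs with h1 h2
    · have : y / 2 ≠ 0 := by omega
      exact Nat.choose_eq_zero_of_lt (by omega)
    · rfl
    · rfl

lemma gg_two (n : ℕ) (s : ℤ) : gg (2*n) (2*s) = chooseZ (2*n) ((n:ℤ) + s) := by
  unfold gg
  have hp : ((2*n : ℕ) : ℤ) + 2*s = 2*((n:ℤ)+s) := by push_cast; ring
  rw [hp]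
  rw [if_pos (by omega)]
  congr 1
  omega


noncomputable def tm (n : ℕ) (x c : ℤ) : ℤ := (gg n (x + c) : ℤ) - (gg n (-2 - x + c) : ℤ)

noncomputable def FF (t N n : ℕ) (x : ℤ) : ℤ :=
  (∑ j ∈ Finset.range (N+1), tm n x (2*(j:ℤ)*((t:ℤ)+2)))
  + ∑ j ∈ Finset.range N, tm n x (-2*((j:ℤ)+1)*((t:ℤ)+2))

lemma tm_pascal (n : ℕ) (x c : ℤ) : tm (n+1) x c = tm n (x-1) c + tm n (x+1) c := by
  unfold tm
  rw [gg_pascal n (x + c), gg_pascal n (-2 - x + c)]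
  have e1 : x + c - 1 = (x-1) + c := by ring
  have e2 : x + c + 1 = (x+1) + c := by ring
  have e3 : -2 - x + c - 1 = -2 - (x+1) + c := by ring
  have e4 : -2 - x + c + 1 = -2 - (x-1) + c := by ring
  rw [e1, e2, e3, e4]
  push_cast
  ring

lemma FF_pascal (t N n : ℕ) (x : ℤ) :
    FF t N (n+1) x = FF t N n (x-1) + FF t N n (x+1) := by
  unfold FF
  simp only [tm_pascal]
  rw [Finset.sum_add_distrib, Finset.sum_add_distrib]
  ring

lemma tm_neg_one (n : ℕ) (c : ℤ) : tm n (-1) c = 0 := by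
  unfold tm
  rw [show (-2 - (-1) + c : ℤ) = -1 + c by ring]
  exact sub_self _

lemma FF_neg_one (t N n : ℕ) : FF t N n (-1) = 0 := by
  simp [FF, tm_neg_one]

lemma FF_top (t N n : ℕ) (h : n + 2 ≤ N) : FF t N n ((t:ℤ)+1) = 0 := by
  have hm4 : (4:ℤ)*N ≤ 2*(N:ℤ)*((t:ℤ)+2) := by nlinarith [Int.ofNat_nonneg t, Int.ofNat_nonneg N]
  set m : ℤ := (t:ℤ)+2 with hm
  set x : ℤ := (t:ℤ)+1 with hx
  have hxm : -2 - x = x - 2*m := by rw [hx, hm]; ring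
  -- first sum
  have h1 : ∑ j ∈ Finset.range (N+1), tm n x (2*(j:ℤ)*m)
      = ∑ j ∈ Finset.range (N+1),
        ((gg n (x + 2*(((j:ℤ)+1)-1)*m) : ℤ) - (gg n (x + 2*((j:ℤ)-1)*m) : ℤ)) := by
    refine Finset.sum_congr rfl fun j _ => ?_
    unfold tm
    rw [hxm]
    congr 2 <;> ring
  have h1' : ∑ j ∈ Finset.range (N+1),
        ((gg n (x + 2*(((j:ℤ)+1)-1)*m) : ℤ) - (gg n (x + 2*((j:ℤ)-1)*m) : ℤ))
      = (gg n (x + 2*(((N:ℤ)+1)-1)*m) : ℤ) - (gg n (x + 2*((0:ℤ)-1)*m) : ℤ) := by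
    have := Finset.sum_range_sub (f := fun j : ℕ => (gg n (x + 2*((j:ℤ)-1)*m) : ℤ)) (n := N+1)
    simpa using this
  -- second sum
  have h2 : ∑ j ∈ Finset.range N, tm n x (-2*((j:ℤ)+1)*m)
      = ∑ j ∈ Finset.range N,
        ((gg n (x - 2*((j:ℤ)+1)*m) : ℤ) - (gg n (x - 2*(((j:ℤ)+1)+1)*m) : ℤ)) := by
    refine Finset.sum_congr rfl fun j _ => ?_
    unfold tm
    rw [hxm]
    congr 2 <;> ring
  have h2' : ∑ j ∈ Finset.range N,
        ((gg n (x - 2*((j:ℤ)+1)*m) : ℤ) - (gg n (x - 2*(((j:ℤ)+1)+1)*m) : ℤ))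
      = (gg n (x - 2*((0:ℤ)+1)*m) : ℤ) - (gg n (x - 2*(((N:ℤ))+1)*m) : ℤ) := by
    have := Finset.sum_range_sub' (f := fun j : ℕ => (gg n (x - 2*((j:ℤ)+1)*m) : ℤ)) (n := N)
    simpa using this
  have hz1 : gg n (x + 2*(((N:ℤ)+1)-1)*m) = 0 := by
    apply gg_eq_zero
    left
    rw [hx, hm]
    push_cast
    nlinarith [Int.ofNat_nonneg t, Int.ofNat_nonneg N, Int.ofNat_nonneg n]
  have hz2 : gg n (x - 2*(((N:ℤ))+1)*m) = 0 := by
    apply gg_eq_zero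
    right
    rw [hx, hm]
    push_cast
    nlinarith [Int.ofNat_nonneg t, Int.ofNat_nonneg N, Int.ofNat_nonneg n]
  have he : x + 2*((0:ℤ)-1)*m = x - 2*((0:ℤ)+1)*m := by ring
  rw [FF, h1, h1', h2, h2', hz1, hz2, he]
  ring

lemma FF_base (t N : ℕ) {x : ℤ} (hx : 0 ≤ x) (hxt : x ≤ (t:ℤ)) :
    FF t N 0 x = if x = 0 then 1 else 0 := by
  have h1 : ∀ j ∈ Finset.range (N+1), tm 0 x (2*(j:ℤ)*((t:ℤ)+2))
      = if j = 0 then (if x = 0 then (1:ℤ) else 0) else 0 := by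
    intro j _
    rcases Nat.eq_zero_or_pos j with rfl | hj
    · rw [if_pos rfl]
      unfold tm
      rw [gg_zero, gg_zero]
      rw [show (x + 2*((0:ℕ):ℤ)*((t:ℤ)+2)) = x by push_cast; ring,
          show (-2 - x + 2*((0:ℕ):ℤ)*((t:ℤ)+2)) = -2-x by push_cast; ring]
      rw [if_neg (by omega : ¬(-2 - x = 0))]
      split_ifs <;> simp
    · rw [if_neg (by omega)]
      have hc : (2:ℤ)*(j:ℤ)*((t:ℤ)+2) ≥ 2*(t:ℤ)+4 := by
        nlinarith [Int.ofNat_nonneg t, (by exact_mod_cast hj : (1:ℤ) ≤ (j:ℤ))]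
      unfold tm
      rw [gg_zero, gg_zero, if_neg (by omega), if_neg (by omega)]
      simp
  have h2 : ∀ j ∈ Finset.range N, tm 0 x (-2*((j:ℤ)+1)*((t:ℤ)+2)) = 0 := by
    intro j _
    have hc : (-2:ℤ)*((j:ℤ)+1)*((t:ℤ)+2) ≤ -(2*(t:ℤ)+4) := by
      nlinarith [Int.ofNat_nonneg t, Int.ofNat_nonneg j]
    unfold tm
    rw [gg_zero, gg_zero, if_neg (by omega), if_neg (by omega)]
    simp
  rw [FF, Finset.sum_congr rfl h1, Finset.sum_congr rfl h2]
  rw [Finset.sum_const_zero, Finset.sum_ite_eq' (Finset.range (N+1)) 0]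
  simp

def DD (t : ℕ) : ℕ → ℕ → ℕ
  | 0, x => if x = 0 then 1 else 0
  | n+1, x => if x ≤ t then (if x = 0 then DD t n 1 else DD t n (x-1) + DD t n (x+1)) else 0

lemma DD_zero (t x : ℕ) : DD t 0 x = if x = 0 then 1 else 0 := rfl

lemma DD_succ (t n x : ℕ) : DD t (n+1) x =
    if x ≤ t then (if x = 0 then DD t n 1 else DD t n (x-1) + DD t n (x+1)) else 0 := rfl

lemma DD_top (t n : ℕ) : DD t n (t+1) = 0 := by
  cases n <;> simp [DD]

def IsPath (t n x : ℕ) (a : ℕ → ℕ) : Prop :=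
  a 0 = x ∧ a n = 0 ∧ (∀ i < n, a (i+1) = a i + 1 ∨ a i = a (i+1) + 1) ∧
    (∀ i, a i ≤ t) ∧ (∀ i, n < i → a i = 0)

instance pathFinite (t n x : ℕ) : Finite {a : ℕ → ℕ // IsPath t n x a} := by
  apply Finite.of_injective
    (f := fun a (i : Fin (n+1)) => (⟨a.1 i, Nat.lt_succ_of_le (a.2.2.2.2.1 i)⟩ : Fin (t+1)))
  intro a b h
  apply Subtype.ext
  funext i
  rcases Nat.lt_or_ge i (n+1) with hi | hi
  · have := congrFun h ⟨i, hi⟩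
    simpa using this
  · rw [a.2.2.2.2.2 i (by omega), b.2.2.2.2.2 i (by omega)]

def consF (x : ℕ) (b : ℕ → ℕ) : ℕ → ℕ := fun i => if i = 0 then x else b (i-1)
def shiftF (a : ℕ → ℕ) : ℕ → ℕ := fun i => a (i+1)

lemma shift_isPath {t n x : ℕ} {a : ℕ → ℕ} (h : IsPath t (n+1) x a) :
    IsPath t n (a 1) (shiftF a) := by
  obtain ⟨h0, hn, hs, hb, ht⟩ := h
  exact ⟨rfl, hn, fun i hi => hs (i+1) (by omega), fun i => hb (i+1),
    fun i hi => ht (i+1) (by omega)⟩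

lemma cons_isPath {t n y x : ℕ} {b : ℕ → ℕ} (h : IsPath t n y b) (hx : x ≤ t)
    (hstep : y = x + 1 ∨ x = y + 1) : IsPath t (n+1) x (consF x b) := by
  obtain ⟨h0, hn, hs, hb, ht⟩ := h
  refine ⟨if_pos rfl, ?_, ?_, ?_, ?_⟩
  · show consF x b (n+1) = 0
    simpa [consF] using hn
  · intro i hi
    rcases Nat.eq_zero_or_pos i with rfl | hip
    · have e1 : consF x b 1 = y := by simp [consF, h0]
      have e0 : consF x b 0 = x := if_pos rfl
      rw [e1, e0]
      exact hstep
    · have e1 : consF x b i = b (i-1) := if_neg (by omega)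
      have e2 : consF x b (i+1) = b i := by simp [consF]
      rw [e1, e2]
      have := hs (i-1) (by omega)
      rwa [Nat.sub_add_cancel hip] at this
  · intro i
    rcases Nat.eq_zero_or_pos i with rfl | hip
    · simpa [consF] using hx
    · have e1 : consF x b i = b (i-1) := if_neg (by omega)
      rw [e1]; exact hb _
  · intro i hi
    have e1 : consF x b i = b (i-1) := if_neg (by omega)
    rw [e1]; exact ht (i-1) (by omega)

lemma first_step {t n x : ℕ} {a : ℕ → ℕ} (h : IsPath t (n+1) x a) :
    a 1 = x + 1 ∨ x = a 1 + 1 := by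
  have := h.2.2.1 0 (by omega)
  rwa [h.1] at this

lemma cons_shift {x : ℕ} {a : ℕ → ℕ} (h : a 0 = x) : consF x (shiftF a) = a := by
  funext i
  rcases Nat.eq_zero_or_pos i with rfl | hip
  · simpa [consF] using h.symm
  · have : i - 1 + 1 = i := by omega
    simp [consF, shiftF, Nat.pos_iff_ne_zero.mp hip, this]

lemma shift_cons (x : ℕ) (b : ℕ → ℕ) : shiftF (consF x b) = b := by
  funext i
  simp [consF, shiftF]

def e0 (t n : ℕ) : {a : ℕ → ℕ // IsPath t (n+1) 0 a} ≃ {b : ℕ → ℕ // IsPath t n 1 b} where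
  toFun a := ⟨shiftF a.1, by
    have h1 : a.1 1 = 1 := by rcases first_step a.2 with h' | h' <;> omega
    have h := shift_isPath a.2
    rwa [h1] at h⟩
  invFun b := ⟨consF 0 b.1, cons_isPath b.2 (Nat.zero_le t) (Or.inl rfl)⟩
  left_inv a := Subtype.ext (cons_shift a.2.1)
  right_inv b := Subtype.ext (shift_cons 0 b.1)

def e1 (t n x : ℕ) (hx1 : 1 ≤ x) (hxt : x ≤ t) :
    {a : ℕ → ℕ // IsPath t (n+1) x a} ≃
      {b : ℕ → ℕ // IsPath t n (x-1) b} ⊕ {b : ℕ → ℕ // IsPath t n (x+1) b} where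
  toFun a :=
    if h : a.1 1 = x + 1 then
      Sum.inr ⟨shiftF a.1, by have hh := shift_isPath a.2; rwa [h] at hh⟩
    else
      Sum.inl ⟨shiftF a.1, by
        have h1 : a.1 1 = x - 1 := by rcases first_step a.2 with h' | h' <;> omega
        have hh := shift_isPath a.2; rwa [h1] at hh⟩
  invFun b := Sum.elim
    (fun b => ⟨consF x b.1, cons_isPath b.2 hxt (Or.inr (by omega))⟩)
    (fun b => ⟨consF x b.1, cons_isPath b.2 hxt (Or.inl rfl)⟩) b
  left_inv a := by
    by_cases h : a.1 1 = x + 1 <;>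
      simp only [h, dif_pos, dif_neg, not_false_iff, Sum.elim_inr, Sum.elim_inl] <;>
      exact Subtype.ext (cons_shift a.2.1)
  right_inv b := by
    rcases b with b | b
    · have hb1 : (consF x b.1) 1 = x - 1 := by simp [consF, b.2.1]
      have hne : ¬ ((consF x b.1) 1 = x + 1) := by omega
      simp only [Sum.elim_inl, dif_neg hne]
      exact (dif_neg hne).trans (congrArg Sum.inl (Subtype.ext (shift_cons x b.1)))
    · have hb1 : (consF x b.1) 1 = x + 1 := by simp [consF, b.2.1]
      simp only [Sum.elim_inr, dif_pos hb1]
      exact (dif_pos hb1).trans (congrArg Sum.inr (Subtype.ext (shift_cons x b.1)))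

lemma card_path (t : ℕ) : ∀ n x, Nat.card {a : ℕ → ℕ // IsPath t n x a} = DD t n x := by
  intro n
  induction n with
  | zero =>
    intro x
    rcases eq_or_ne x 0 with rfl | hx
    · rw [show DD t 0 0 = 1 by simp [DD]]
      rw [Nat.card_eq_one_iff_unique]
      constructor
      · constructor
        intro a b
        apply Subtype.ext
        funext i
        rcases Nat.eq_zero_or_pos i with rfl | hip
        · rw [a.2.1, b.2.1]
        · rw [a.2.2.2.2.2 i hip, b.2.2.2.2.2 i hip]
      · exact ⟨⟨fun _ => 0, rfl, rfl, fun i hi => by omega, fun i => Nat.zero_le t,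
          fun i _ => rfl⟩⟩
    · rw [show DD t 0 x = 0 by simp [DD, hx]]
      have : IsEmpty {a : ℕ → ℕ // IsPath t 0 x a} := by
        constructor
        intro a
        exact hx (a.2.1 ▸ a.2.2.1)
      exact Nat.card_of_isEmpty
  | succ n ih =>
    intro x
    rcases Nat.lt_or_ge t x with hxt | hxt
    · rw [show DD t (n+1) x = 0 by simp [DD]; omega]
      have : IsEmpty {a : ℕ → ℕ // IsPath t (n+1) x a} := by
        constructor
        intro a
        have := a.2.2.2.2.1 0
        rw [a.2.1] at this
        omega
      exact Nat.card_of_isEmpty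
    · rcases Nat.eq_zero_or_pos x with rfl | hx1
      · rw [Nat.card_congr (e0 t n), ih 1]
        simp [DD]
      · rw [Nat.card_congr (e1 t n x hx1 hxt), Nat.card_sum, ih (x-1), ih (x+1)]
        rw [show DD t (n+1) x = DD t n (x-1) + DD t n (x+1) by simp [DD, hxt]; omega]

lemma A_eq {n : ℕ} (t : ℕ) (hn : 1 ≤ n) : A n t = DD t (2*n) 0 := by
  rw [A, if_neg (by omega), ← card_path t (2*n) 0]
  apply Nat.card_congr
  apply Equiv.subtypeEquivRight
  intro a
  constructor
  · rintro ⟨⟨h1, h2, h3, h0, htail⟩, hb⟩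
    refine ⟨h0, h2, ?_, hb, htail⟩
    intro i hi
    rcases Nat.eq_zero_or_pos i with rfl | hip
    · left; rw [h1, h0]
    · exact h3 i hip hi
  · rintro ⟨h0, h2, hs, hb, htail⟩
    have h1 : a 1 = 1 := by
      have := hs 0 (by omega)
      rw [h0] at this
      simpa using this
    exact ⟨⟨h1, h2, fun i _ hi => hs i hi, h0, htail⟩, hb⟩

lemma DD_eq_FF (t : ℕ) : ∀ n N, n + 2 ≤ N → ∀ x : ℕ, x ≤ t → (DD t n x : ℤ) = FF t N n x := by
  intro n
  induction n with
  | zero =>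
    intro N _ x hx
    rw [DD_zero, FF_base t N (by positivity) (by exact_mod_cast hx)]
    split_ifs with h1 h2 h2
    · rfl
    · exact absurd (by exact_mod_cast h1) h2
    · exact absurd (by exact_mod_cast h2) h1
    · rfl
  | succ n ih =>
    intro N hN x hx
    have hN' : n + 2 ≤ N := by omega
    rcases Nat.eq_zero_or_pos x with rfl | hx1
    · rw [DD_succ, if_pos (Nat.zero_le t), if_pos rfl]
      have hp : FF t N (n+1) ((0:ℕ):ℤ) = FF t N n (-1) + FF t N n 1 := by
        have := FF_pascal t N n 0
        simpa using this
      rw [hp, FF_neg_one, zero_add]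
      rcases Nat.lt_or_ge t 1 with ht | ht
      · have ht0 : t = 0 := by omega
        subst ht0
        have hf := FF_top 0 N n hN'
        norm_num at hf
        have hd : DD 0 n 1 = 0 := DD_top 0 n
        rw [hd, hf]
        norm_num
      · have := ih N hN' 1 ht
        rwa [show ((1:ℕ):ℤ) = 1 by norm_num] at this
    · rw [DD_succ, if_pos hx, if_neg (by omega)]
      have hp : FF t N (n+1) ((x:ℕ):ℤ) = FF t N n ((x:ℤ)-1) + FF t N n ((x:ℤ)+1) :=
        FF_pascal t N n x
      rw [hp]
      have e1 : ((x-1 : ℕ) : ℤ) = (x:ℤ)-1 := by omega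
      have h1 : (DD t n (x-1) : ℤ) = FF t N n ((x:ℤ)-1) := by
        rw [← e1]; exact ih N hN' (x-1) (by omega)
      rcases Nat.lt_or_ge x t with hlt | hge
      · have h2 : (DD t n (x+1) : ℤ) = FF t N n ((x:ℤ)+1) := by
          have := ih N hN' (x+1) (by omega)
          rwa [show ((x+1:ℕ):ℤ) = (x:ℤ)+1 by push_cast; ring] at this
        rw [Nat.cast_add, h1, h2]
      · have hxt : x = t := by omega
        have h2 : (DD t n (x+1) : ℤ) = FF t N n ((x:ℤ)+1) := by
          rw [hxt]
          have hd : DD t n (t+1) = 0 := DD_top t n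
          rw [hd, FF_top t N n hN']
          norm_num
        rw [Nat.cast_add, h1, h2]
noncomputable def PP (t n j : ℕ) : ℤ :=
  (chooseZ (2*n) ((n:ℤ) - j*((t:ℤ)+2)) : ℤ) - chooseZ (2*n) ((n:ℤ) - j*((t:ℤ)+2) - 1)
noncomputable def QQ (t n j : ℕ) : ℤ :=
  (chooseZ (2*n) ((n:ℤ) - j*((t:ℤ)+2)) : ℤ) - chooseZ (2*n) ((n:ℤ) - j*((t:ℤ)+2) + 1)

lemma jm_big {t n j : ℕ} (hj : n + 1 ≤ j) : (2:ℤ)*(n:ℤ) + 2 ≤ (j:ℤ)*((t:ℤ)+2) := by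
  have h1 : ((n:ℤ)+1) ≤ (j:ℤ) := by exact_mod_cast hj
  nlinarith [Int.ofNat_nonneg t, Int.ofNat_nonneg n]

lemma PP_zero {t n j : ℕ} (hj : n + 1 ≤ j) : PP t n j = 0 := by
  have := jm_big (t := t) (n := n) hj
  rw [PP, chooseZ_neg (by omega), chooseZ_neg (by omega)]
  simp

lemma QQ_zero {t n j : ℕ} (hj : n + 1 ≤ j) : QQ t n j = 0 := by
  have := jm_big (t := t) (n := n) hj
  rw [QQ, chooseZ_neg (by omega), chooseZ_neg (by omega)]
  simp

lemma QQ_zero_eq_PP_zero (t n : ℕ) : QQ t n 0 = PP t n 0 := by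
  rw [QQ, PP]
  congr 1
  have e1 : (n:ℤ) - (0:ℕ)*((t:ℤ)+2) + 1 = (n:ℤ) + 1 := by push_cast; ring
  have e2 : (n:ℤ) - (0:ℕ)*((t:ℤ)+2) - 1 = (n:ℤ) - 1 := by push_cast; ring
  rw [e1, e2, chooseZ_symm n 1]

lemma tm_pos (t n j : ℕ) : tm (2*n) 0 (2*(j:ℤ)*((t:ℤ)+2)) = QQ t n j := by
  rw [tm]
  have e1 : (0:ℤ) + 2*(j:ℤ)*((t:ℤ)+2) = 2*((j:ℤ)*((t:ℤ)+2)) := by ring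
  have e2 : (-2:ℤ) - 0 + 2*(j:ℤ)*((t:ℤ)+2) = 2*((j:ℤ)*((t:ℤ)+2) - 1) := by ring
  rw [e1, e2, gg_two, gg_two, chooseZ_symm n ((j:ℤ)*((t:ℤ)+2)),
    chooseZ_symm n ((j:ℤ)*((t:ℤ)+2) - 1), QQ]
  congr 2
  ring

lemma tm_neg (t n j : ℕ) : tm (2*n) 0 (-2*((j:ℤ)+1)*((t:ℤ)+2)) = PP t n (j+1) := by
  rw [tm]
  have e1 : (0:ℤ) + -2*((j:ℤ)+1)*((t:ℤ)+2) = 2*(-(((j:ℤ)+1)*((t:ℤ)+2))) := by ring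
  have e2 : (-2:ℤ) - 0 + -2*((j:ℤ)+1)*((t:ℤ)+2) = 2*(-(((j:ℤ)+1)*((t:ℤ)+2)) - 1) := by ring
  rw [e1, e2, gg_two, gg_two, PP]
  congr 2 <;> push_cast <;> ring

lemma FF_final (t n : ℕ) :
    FF t (2*n+2) (2*n) 0 =
      ∑ j ∈ Finset.range (n+1),
        ((chooseZ (2*n) ((n : ℤ) - j*(t+2)) : ℤ)
          - chooseZ (2*n) ((n : ℤ) - j*(t+2) - 1)
          - chooseZ (2*n) ((n : ℤ) - j*(t+2) - t - 1)
          + chooseZ (2*n) ((n : ℤ) - (j+1)*(t+2))) := by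
  have hT : ∀ j : ℕ,
      ((chooseZ (2*n) ((n : ℤ) - j*(t+2)) : ℤ)
          - chooseZ (2*n) ((n : ℤ) - j*(t+2) - 1)
          - chooseZ (2*n) ((n : ℤ) - j*(t+2) - t - 1)
          + chooseZ (2*n) ((n : ℤ) - (j+1)*(t+2)))
        = PP t n j + QQ t n (j+1) := by
    intro j
    rw [PP, QQ]
    have e1 : (n:ℤ) - (j+1:ℕ)*((t:ℤ)+2) = (n:ℤ) - ((j:ℤ)+1)*((t:ℤ)+2) := by push_cast; ring
    have e2 : (n:ℤ) - ((j:ℤ)+1)*((t:ℤ)+2) + 1 = (n:ℤ) - (j:ℤ)*((t:ℤ)+2) - (t:ℤ) - 1 := by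
      push_cast; ring
    rw [e1, e2]
    ring
  -- FF as sums of QQ and PP
  have hFF : FF t (2*n+2) (2*n) 0
      = (∑ j ∈ Finset.range (2*n+3), QQ t n j) + ∑ j ∈ Finset.range (2*n+2), PP t n (j+1) := by
    rw [FF]
    congr 1
    · refine Finset.sum_congr (by norm_num) fun j _ => tm_pos t n j
    · exact Finset.sum_congr rfl fun j _ => tm_neg t n j
  -- truncate
  have hQ : ∑ j ∈ Finset.range (2*n+3), QQ t n j = ∑ j ∈ Finset.range (n+2), QQ t n j := by
    refine (Finset.sum_subset (Finset.range_subset_range.mpr (by omega)) ?_).symm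
    intro j _ hj
    exact QQ_zero (by simp [Finset.mem_range] at hj; omega)
  have hP : ∑ j ∈ Finset.range (2*n+2), PP t n (j+1) = ∑ j ∈ Finset.range (n+1), PP t n (j+1) := by
    refine (Finset.sum_subset (Finset.range_subset_range.mpr (by omega)) ?_).symm
    intro j _ hj
    exact PP_zero (by simp [Finset.mem_range] at hj; omega)
  rw [hFF, hQ, hP, Finset.sum_congr rfl fun j _ => hT j, Finset.sum_add_distrib]
  rw [Finset.sum_range_succ' (fun j => QQ t n j) (n+1)]
  rw [Finset.sum_range_succ' (fun j => PP t n j) n]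
  rw [Finset.sum_range_succ (fun j => PP t n (j+1)) n]
  rw [PP_zero (le_refl (n+1)), QQ_zero_eq_PP_zero]
  ring

end Strip

theorem stmt1 (n t : ℕ) (hn : 1 ≤ n) :
    (A n t : ℤ) =
      ∑ j ∈ Finset.range (n+1),
        ((chooseZ (2*n) ((n : ℤ) - j*(t+2)) : ℤ)
          - chooseZ (2*n) ((n : ℤ) - j*(t+2) - 1)
          - chooseZ (2*n) ((n : ℤ) - j*(t+2) - t - 1)
          + chooseZ (2*n) ((n : ℤ) - (j+1)*(t+2))) := by
  rw [Strip.A_eq t hn]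
  have h2 := Strip.DD_eq_FF t (2*n) (2*n+2) (by omega) 0 (Nat.zero_le t)
  push_cast at h2
  rw [h2, Strip.FF_final]
end

section
/- For n ≥ 1 and t ≥ 0, the number A_{n,t} of Dyck paths of semilength n with height at most t satisfies A_{n,t} = (1/(t+2)) * Σ_{1 ≤ j ≤ (t+1)/2} 4^{n+1} sin²(jπ/(t+2)) cos^{2n}(jπ/(t+2)). -/
open Finset Real Filter

def WalkP (t m k : ℕ) (b : ℕ → ℕ) : Prop :=
  b 0 = 0 ∧ (∀ i, i < m → (b (i+1) = b i + 1 ∨ b i = b (i+1) + 1)) ∧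
  (∀ i, m ≤ i → b i = k) ∧ ∀ i, b i ≤ t

instance walkFinite (t m k : ℕ) : Finite {b : ℕ → ℕ // WalkP t m k b} := by
  have : Function.Injective (fun b : {b : ℕ → ℕ // WalkP t m k b} =>
      (fun i : Fin (m+1) => (⟨b.1 i, Nat.lt_succ_of_le (b.2.2.2.2 i)⟩ : Fin (t+1)))) := by
    rintro ⟨b, hb⟩ ⟨c, hc⟩ h
    refine Subtype.ext (funext fun i => ?_)
    show b i = c i
    rcases le_or_gt i m with hi | hi
    · have := congrFun h ⟨i, by omega⟩
      simpa [Fin.ext_iff] using this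
    · rw [hb.2.2.1 i (by omega), hc.2.2.1 i (by omega)]
  exact Finite.of_injective _ this

noncomputable def W (t m k : ℕ) : ℕ := Nat.card {b : ℕ → ℕ // WalkP t m k b}

lemma W_zero (t k : ℕ) : W t 0 k = if k = 0 then 1 else 0 := by
  rcases eq_or_ne k 0 with rfl | hk
  · simp only [if_pos rfl, W]
    have : Unique {b : ℕ → ℕ // WalkP t 0 0 b} := by
      refine ⟨⟨⟨fun _ => 0, rfl, fun i hi => absurd hi (by omega), fun i _ => rfl,
        fun i => Nat.zero_le t⟩⟩, ?_⟩
      rintro ⟨b, hb⟩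
      exact Subtype.ext (funext fun i => hb.2.2.1 i (by omega))
    exact Nat.card_unique
  · simp only [if_neg hk, W]
    have : IsEmpty {b : ℕ → ℕ // WalkP t 0 k b} := by
      constructor; rintro ⟨b, hb⟩
      exact hk (by rw [← hb.2.2.1 0 le_rfl, hb.1])
    exact Nat.card_of_isEmpty

lemma W_big (t m k : ℕ) (h : t < k) : W t m k = 0 := by
  have : IsEmpty {b : ℕ → ℕ // WalkP t m k b} := by
    constructor; rintro ⟨b, hb⟩
    have := hb.2.2.1 m le_rfl
    have := hb.2.2.2 m
    omega
  exact Nat.card_of_isEmpty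

/-- truncation of a walk of length `m+1` -/
lemma walk_trunc {t m k : ℕ} {b : ℕ → ℕ} (hb : WalkP t (m+1) k b) :
    WalkP t m (b m) (fun i => if i ≤ m then b i else b m) := by
  obtain ⟨h0, hstep, hend, hbd⟩ := hb
  refine ⟨by simp [h0], ?_, ?_, ?_⟩
  · intro i hi
    simp only [if_pos (by omega : i + 1 ≤ m), if_pos (by omega : i ≤ m)]
    exact hstep i (by omega)
  · intro i hi
    by_cases h : i ≤ m
    · have : i = m := by omega
      subst this; simp
    · simp [h]
  · intro i
    by_cases h : i ≤ m
    · simpa [h] using hbd i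
    · simpa [h] using hbd m

lemma walk_ext {t m k k' : ℕ} {c : ℕ → ℕ} (hc : WalkP t m k' c)
    (hstep : k = k' + 1 ∨ k' = k + 1) (hk : k ≤ t) :
    WalkP t (m+1) k (fun i => if i ≤ m then c i else k) := by
  obtain ⟨h0, hstep', hend, hbd⟩ := hc
  refine ⟨by simp [h0], ?_, ?_, ?_⟩
  · intro i hi
    rcases Nat.lt_or_ge i m with h | h
    · simp only [if_pos (by omega : i + 1 ≤ m), if_pos (by omega : i ≤ m)]
      exact hstep' i h
    · have hi' : i = m := by omega
      subst hi'
      simp only [if_neg (by omega : ¬ i + 1 ≤ i), if_pos le_rfl]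
      have hcm : c i = k' := hend i le_rfl
      omega
  · intro i hi
    simp [Nat.not_le.mpr (by omega : m < i)]
  · intro i
    by_cases h : i ≤ m
    · simpa [h] using hbd i
    · simpa [h]

lemma walk_bm {t m k : ℕ} {b : ℕ → ℕ} (hb : WalkP t (m+1) k b) :
    (k = b m + 1) ∨ (b m = k + 1) := by
  have := hb.2.1 m (by omega)
  have := hb.2.2.1 (m+1) le_rfl
  omega

lemma W_succ_zero (t m : ℕ) : W t (m+1) 0 = W t m 1 := by
  refine Nat.card_eq_of_bijective (fun b =>
    ⟨fun i => if i ≤ m then b.1 i else 1, by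
      have h := walk_trunc b.2
      have hbm : b.1 m = 1 := by rcases walk_bm b.2 with h' | h' <;> omega
      simp only [hbm] at h
      exact h⟩) ⟨?_, ?_⟩
  · rintro ⟨b, hb⟩ ⟨c, hc⟩ h
    have h' := congrArg Subtype.val h
    refine Subtype.ext (funext fun i => ?_)
    show b i = c i
    rcases le_or_gt i m with hi | hi
    · have := congrFun h' i
      simpa [hi] using this
    · rw [hb.2.2.1 i (by omega), hc.2.2.1 i (by omega)]
  · rintro ⟨c, hc⟩
    have hcm : c m = 1 := hc.2.2.1 m le_rfl
    refine ⟨⟨fun i => if i ≤ m then c i else 0, walk_ext hc (by omega) (by omega)⟩, ?_⟩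
    refine Subtype.ext (funext fun i => ?_)
    show (if i ≤ m then (if i ≤ m then c i else 0) else 1) = c i
    rcases le_or_gt i m with hi | hi
    · simp [hi]
    · simp [Nat.not_le.mpr hi, hc.2.2.1 i (le_of_lt (by omega))]

lemma W_succ (t m k : ℕ) (hk : k + 1 ≤ t) :
    W t (m+1) (k+1) = W t m k + W t m (k+2) := by
  classical
  rw [W, W, W, ← Nat.card_sum]
  refine Nat.card_eq_of_bijective (fun b =>
    if h : b.1 m = k + 2 then
      Sum.inr ⟨fun i => if i ≤ m then b.1 i else k + 2, by
        have ht := walk_trunc b.2; simp only [h] at ht; exact ht⟩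
    else
      Sum.inl ⟨fun i => if i ≤ m then b.1 i else k, by
        have hbm : b.1 m = k := by rcases walk_bm b.2 with h' | h' <;> omega
        have ht := walk_trunc b.2; simp only [hbm] at ht; exact ht⟩) ⟨?_, ?_⟩
  · rintro ⟨b, hb⟩ ⟨c, hc⟩ h
    dsimp only at h
    have key : ∀ i ≤ m, b i = c i := by
      by_cases hbm : b m = k + 2 <;> by_cases hcm : c m = k + 2
      · rw [dif_pos hbm, dif_pos hcm, Sum.inr.injEq] at h
        intro i hi
        have := congrFun (congrArg Subtype.val h) i
        simpa [hi] using this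
      · rw [dif_pos hbm, dif_neg hcm] at h; simp at h
      · rw [dif_neg hbm, dif_pos hcm] at h; simp at h
      · rw [dif_neg hbm, dif_neg hcm, Sum.inl.injEq] at h
        intro i hi
        have := congrFun (congrArg Subtype.val h) i
        simpa [hi] using this
    refine Subtype.ext (funext fun i => ?_)
    show b i = c i
    rcases le_or_gt i m with hi | hi
    · exact key i hi
    · rw [hb.2.2.1 i (by omega), hc.2.2.1 i (by omega)]
  · rintro (⟨c, hc⟩ | ⟨c, hc⟩)
    · have hcm : c m = k := hc.2.2.1 m le_rfl
      refine ⟨⟨fun i => if i ≤ m then c i else k+1, walk_ext hc (by omega) hk⟩, ?_⟩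
      dsimp only
      rw [dif_neg (by rw [if_pos le_rfl, hcm]; omega)]
      congr 1
      refine Subtype.ext (funext fun i => ?_)
      show (if i ≤ m then (if i ≤ m then c i else k+1) else k) = c i
      rcases le_or_gt i m with hi | hi
      · simp [hi]
      · simp [Nat.not_le.mpr hi, hc.2.2.1 i (le_of_lt (by omega))]
    · have hcm : c m = k + 2 := hc.2.2.1 m le_rfl
      refine ⟨⟨fun i => if i ≤ m then c i else k+1, walk_ext hc (by omega) hk⟩, ?_⟩
      dsimp only
      rw [dif_pos (by rw [if_pos le_rfl, hcm])]
      congr 1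
      refine Subtype.ext (funext fun i => ?_)
      show (if i ≤ m then (if i ≤ m then c i else k+1) else k+2) = c i
      rcases le_or_gt i m with hi | hi
      · simp [hi]
      · simp [Nat.not_le.mpr hi, hc.2.2.1 i (le_of_lt (by omega))]

noncomputable def th (t j : ℕ) : ℝ := j * π / (t+2)

/-- Dirichlet-type cosine sum. -/
lemma Dsum (t m : ℕ) (h1 : 1 ≤ m) (h2 : m ≤ 2*t+3) :
    ∑ j ∈ Icc 1 (t+1), Real.cos (m * th t j) = if 2 ∣ m then -1 else 0 := by
  set x : ℝ := m * π / (t+2) with hx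
  have hterm : ∀ j : ℕ, (m:ℝ) * th t j = j * x := by
    intro j; rw [th, hx]; ring
  have hxpos : 0 < x / 2 := by
    rw [hx]
    have : (0:ℝ) < (m:ℝ) := by exact_mod_cast h1
    positivity
  have hxlt : x / 2 < π := by
    rw [hx, div_div, div_lt_iff₀ (by positivity)]
    have hm : (m:ℝ) ≤ 2*(t:ℝ)+3 := by exact_mod_cast h2
    nlinarith [Real.pi_pos]
  have hsin : Real.sin (x/2) ≠ 0 := ne_of_gt (Real.sin_pos_of_pos_of_lt_pi hxpos hxlt)
  -- telescoping
  have tele : 2 * Real.sin (x/2) * ∑ j ∈ Icc 1 (t+1), Real.cos (j * x)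
      = Real.sin (((t:ℝ)+1+1/2) * x) - Real.sin (x/2) := by
    rw [Finset.mul_sum]
    rw [show (Icc 1 (t+1)) = (Icc (0+1) (t+1)) from rfl, ← Finset.Ico_add_one_right_eq_Icc]
    rw [Finset.sum_Ico_eq_sum_range]
    have hc : ∀ i ∈ Finset.range (t+1+1-1), 2 * Real.sin (x/2) * Real.cos ((((1+i):ℕ):ℝ) * x)
        = Real.sin (((((i+1):ℕ):ℝ)+1/2) * x) - Real.sin ((((i:ℕ):ℝ)+1/2) * x) := by
      intro i _
      rw [Real.sin_sub_sin]
      push_cast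
      ring_nf
    rw [Finset.sum_congr rfl hc,
      Finset.sum_range_sub (fun i => Real.sin ((((i:ℕ):ℝ)+1/2) * x)) (t+1+1-1)]
    push_cast
    norm_num
    ring_nf
  have hval : Real.sin (((t:ℝ)+1+1/2) * x) = - ((-1:ℝ)^m * Real.sin (x/2)) := by
    have harg : ((t:ℝ)+1+1/2) * x = m * π - x/2 := by
      rw [hx]; field_simp; ring
    rw [harg, Real.sin_nat_mul_pi_sub]
  rw [show (∑ j ∈ Icc 1 (t+1), Real.cos (m * th t j))
      = ∑ j ∈ Icc 1 (t+1), Real.cos (j * x) from Finset.sum_congr rfl fun j _ => by rw [hterm]]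
  rcases Nat.even_or_odd m with hev | hod
  · rw [if_pos hev.two_dvd]
    have hpow : ((-1:ℝ))^m = 1 := hev.neg_one_pow
    apply mul_left_cancel₀ (mul_ne_zero two_ne_zero hsin)
    rw [tele, hval, hpow]; ring
  · rw [if_neg (fun hdvd => (Nat.not_even_iff_odd.mpr hod) (even_iff_two_dvd.mpr hdvd))]
    have hpow : ((-1:ℝ))^m = -1 := Odd.neg_one_pow hod
    apply mul_left_cancel₀ (mul_ne_zero two_ne_zero hsin)
    rw [tele, hval, hpow]; ring

lemma prod_to_sum (θ : ℝ) (k : ℕ) :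
    Real.sin θ * Real.sin (((k:ℝ)+1) * θ)
      = (Real.cos ((k:ℝ) * θ) - Real.cos (((k:ℝ)+2) * θ))/2 := by
  rw [Real.cos_sub_cos,
    show ((k:ℝ)*θ + ((k:ℝ)+2)*θ)/2 = ((k:ℝ)+1)*θ by ring,
    show ((k:ℝ)*θ - ((k:ℝ)+2)*θ)/2 = -θ by ring, Real.sin_neg]
  ring

lemma ortho (t k : ℕ) (hk : k ≤ t+1) :
    ∑ j ∈ Icc 1 (t+1), Real.sin (th t j) * Real.sin (((k:ℝ)+1) * th t j)
      = if k = 0 then ((t:ℝ)+2)/2 else 0 := by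
  have hsplit : ∑ j ∈ Icc 1 (t+1), Real.sin (th t j) * Real.sin (((k:ℝ)+1) * th t j)
      = ((∑ j ∈ Icc 1 (t+1), Real.cos ((k:ℝ) * th t j))
        - ∑ j ∈ Icc 1 (t+1), Real.cos (((k:ℝ)+2) * th t j))/2 := by
    rw [← Finset.sum_sub_distrib, Finset.sum_div]
    exact Finset.sum_congr rfl fun j _ => prod_to_sum (th t j) k
  rw [hsplit]
  have hc2 : ∑ j ∈ Icc 1 (t+1), Real.cos (((k:ℝ)+2) * th t j) = if 2 ∣ (k+2) then (-1:ℝ) else 0 := by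
    have := Dsum t (k+2) (by omega) (by omega)
    rw [show (((k:ℝ))+2) = (((k+2:ℕ)):ℝ) by push_cast; ring]
    exact this
  rcases eq_or_ne k 0 with rfl | hk0
  · rw [if_pos rfl]
    have hc0 : ∑ j ∈ Icc 1 (t+1), Real.cos (((0:ℕ):ℝ) * th t j) = (t:ℝ)+1 := by
      have : ∀ j ∈ Icc 1 (t+1), Real.cos (((0:ℕ):ℝ) * th t j) = 1 := by
        intro j _; norm_num
      rw [Finset.sum_congr rfl this, Finset.sum_const, Nat.card_Icc]
      push_cast; norm_num
    rw [hc0, hc2, if_pos (by omega)]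
    push_cast; ring
  · rw [if_neg hk0]
    have hck : ∑ j ∈ Icc 1 (t+1), Real.cos ((k:ℝ) * th t j) = if 2 ∣ k then (-1:ℝ) else 0 :=
      Dsum t k (by omega) (by omega)
    rw [hck, hc2]
    rcases Nat.even_or_odd k with he | ho
    · rw [Nat.even_iff] at he
      rw [if_pos (by omega : 2 ∣ k), if_pos (by omega : 2 ∣ k + 2)]; ring
    · rw [Nat.odd_iff] at ho
      rw [if_neg (by omega : ¬ 2 ∣ k), if_neg (by omega : ¬ 2 ∣ (k+2))]
      ring

noncomputable def Ff (t m k : ℕ) : ℝ :=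
  (2/((t:ℝ)+2)) * ∑ j ∈ Icc 1 (t+1),
    (2*Real.cos (th t j))^m * Real.sin (th t j) * Real.sin (((k:ℝ)+1) * th t j)

lemma sin_rec (θ : ℝ) (k : ℕ) :
    Real.sin ((k:ℝ) * θ) + Real.sin (((k:ℝ)+2) * θ)
      = 2 * Real.cos θ * Real.sin (((k:ℝ)+1) * θ) := by
  rw [show (k:ℝ)*θ = ((k:ℝ)+1)*θ - θ by ring,
    show ((k:ℝ)+2)*θ = ((k:ℝ)+1)*θ + θ by ring, Real.sin_sub, Real.sin_add]
  ring

lemma sin_top (t j : ℕ) : Real.sin (((t:ℝ)+2) * th t j) = 0 := by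
  rw [th, show ((t:ℝ)+2) * ((j:ℝ) * π / ((t:ℝ)+2)) = (j:ℝ) * π by
    field_simp]
  exact Real.sin_nat_mul_pi j

lemma Ff_zero (t k : ℕ) (hk : k ≤ t+1) : Ff t 0 k = if k = 0 then 1 else 0 := by
  rw [Ff]
  have : ∀ j ∈ Icc 1 (t+1), (2*Real.cos (th t j))^0 * Real.sin (th t j)
      * Real.sin (((k:ℝ)+1) * th t j) = Real.sin (th t j) * Real.sin (((k:ℝ)+1) * th t j) := by
    intro j _; rw [pow_zero, one_mul]
  rw [Finset.sum_congr rfl this, ortho t k hk]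
  have h2 : ((t:ℝ)+2) ≠ 0 := by positivity
  rcases eq_or_ne k 0 with rfl | h
  · rw [if_pos rfl, if_pos rfl]; field_simp
  · rw [if_neg h, if_neg h, mul_zero]

lemma Ff_top (t m n' : ℕ) (h : n' = t + 1) : Ff t m n' = 0 := by
  subst h
  rw [Ff]
  have : ∀ j ∈ Icc 1 (t+1), (2*Real.cos (th t j))^m * Real.sin (th t j)
      * Real.sin ((((t+1:ℕ):ℝ)+1) * th t j) = 0 := by
    intro j _
    have : (((t+1:ℕ):ℝ)+1) = ((t:ℝ)+2) := by push_cast; ring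
    rw [this, sin_top, mul_zero]
  rw [Finset.sum_congr rfl this, Finset.sum_const_zero, mul_zero]

lemma Ff_succ_zero (t m : ℕ) : Ff t (m+1) 0 = Ff t m 1 := by
  rw [Ff, Ff]
  congr 1
  refine Finset.sum_congr rfl fun j _ => ?_
  have h := sin_rec (th t j) 0
  push_cast at h ⊢
  norm_num at h ⊢
  rw [pow_succ]
  linear_combination (-((2 * Real.cos (th t j))^m * Real.sin (th t j))) * h

lemma Ff_succ (t m k : ℕ) : Ff t (m+1) (k+1) = Ff t m k + Ff t m (k+2) := by
  rw [Ff, Ff, Ff, ← mul_add, ← Finset.sum_add_distrib]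
  congr 1
  refine Finset.sum_congr rfl fun j _ => ?_
  have h := sin_rec (th t j) (k+1)
  push_cast at h ⊢
  rw [pow_succ, show ((k:ℝ)+2+1)*th t j = ((k:ℝ)+1+2)*th t j by ring]
  linear_combination (-((2 * Real.cos (th t j))^m * Real.sin (th t j))) * h


lemma fold (t n : ℕ) (hn : 1 ≤ n) :
    ∑ j ∈ Icc 1 (t+1), Real.sin (th t j)^2 * Real.cos (th t j)^(2*n)
      = 2 * ∑ j ∈ Icc 1 ((t+1)/2), Real.sin (th t j)^2 * Real.cos (th t j)^(2*n) := by
  set f : ℕ → ℝ := fun j => Real.sin (th t j)^2 * Real.cos (th t j)^(2*n) with hf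
  set M := (t+1)/2 with hM
  have hsym : ∀ j, 1 ≤ j → j ≤ t+1 → f (t+2-j) = f j := by
    intro j h1 h2
    have hc : ((t+2-j : ℕ):ℝ) = (t:ℝ)+2-(j:ℝ) := by
      rw [Nat.cast_sub (by omega : j ≤ t+2)]; push_cast; ring
    have hth : th t (t+2-j) = π - th t j := by
      rw [th, th, hc]
      have : ((t:ℝ)+2) ≠ 0 := by positivity
      field_simp
    simp only [hf, hth, Real.sin_pi_sub, Real.cos_pi_sub]
    rw [Even.neg_pow ⟨n, two_mul n⟩]
  have hunion : Icc 1 (t+1) = Icc 1 M ∪ Ioc M (t+1) := by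
    ext x; simp only [Finset.mem_Icc, Finset.mem_Ioc, Finset.mem_union]; omega
  have hdisj : Disjoint (Icc 1 M) (Ioc M (t+1)) := by
    simp only [Finset.disjoint_left, Finset.mem_Icc, Finset.mem_Ioc]
    intro a ha hb; omega
  rw [hunion, Finset.sum_union hdisj]
  have hre : ∑ j ∈ Ioc M (t+1), f j = ∑ j ∈ Icc 1 (t+1-M), f j := by
    refine Finset.sum_nbij' (fun a => t+2-a) (fun a => t+2-a) ?_ ?_ ?_ ?_ ?_
    · intro a ha; simp only [Finset.mem_Ioc] at ha; simp only [Finset.mem_Icc]; omega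
    · intro a ha; simp only [Finset.mem_Icc] at ha; simp only [Finset.mem_Ioc]; omega
    · intro a ha; simp only [Finset.mem_Ioc] at ha; show t+2-(t+2-a) = a; omega
    · intro a ha; simp only [Finset.mem_Icc] at ha; show t+2-(t+2-a) = a; omega
    · intro a ha; simp only [Finset.mem_Ioc] at ha
      exact (hsym a (by omega) (by omega)).symm
  rw [hre]
  rcases Nat.even_or_odd t with he | ho
  · -- t even : t+1-M = M+1, extra middle term vanishes
    rw [Nat.even_iff] at he
    have h1 : t+1-M = M+1 := by omega
    rw [h1, Finset.sum_Icc_succ_top (by omega : 1 ≤ M+1)]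
    have hmid : f (M+1) = 0 := by
      have ht2 : (t:ℝ) = 2*(M:ℝ) := by
        have : t = 2*M := by omega
        exact_mod_cast congrArg (Nat.cast : ℕ → ℝ) this
      have hth : th t (M+1) = π/2 := by
        rw [th, ht2]
        have : ((M:ℝ)+1) ≠ 0 := by positivity
        push_cast
        field_simp
      simp only [hf, hth, Real.cos_pi_div_two]
      rw [zero_pow (by omega : 2*n ≠ 0), mul_zero]
    rw [hmid, add_zero]
    ring
  · rw [Nat.odd_iff] at ho
    have h1 : t+1-M = M := by omega
    rw [h1]
    ring


lemma A_eq_W (n t : ℕ) (hn : 1 ≤ n) : A n t = W t (2*n) 0 := by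
  rw [A, if_neg (by omega), W]
  apply Nat.card_congr
  apply Equiv.subtypeEquivRight
  intro a
  constructor
  · rintro ⟨⟨h1, h2n, hstep, h0, hpad⟩, hbd⟩
    refine ⟨h0, ?_, ?_, hbd⟩
    · intro i hi
      rcases Nat.eq_zero_or_pos i with rfl | hi1
      · left; rw [h1, h0]
      · exact hstep i hi1 hi
    · intro i hi
      rcases eq_or_lt_of_le hi with h | h
      · rw [← h]; exact h2n
      · exact hpad i h
  · rintro ⟨h0, hstep, hend, hbd⟩
    have h1 : a 1 = 1 := by
      have h := hstep 0 (by omega)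
      norm_num at h
      omega
    exact ⟨⟨h1, hend (2*n) le_rfl, fun i hi1 hi2 => hstep i hi2, h0,
      fun i hi => hend i (by omega)⟩, hbd⟩

lemma W_eq_F (t : ℕ) : ∀ m k, k ≤ t+1 → ((W t m k : ℝ)) = Ff t m k := by
  intro m
  induction m with
  | zero =>
    intro k hk
    rw [W_zero, Ff_zero t k hk]
    split <;> simp
  | succ m ih =>
    intro k hk
    match k with
    | 0 => rw [W_succ_zero, ih 1 (by omega), Ff_succ_zero]
    | (k+1) =>
      rcases eq_or_lt_of_le hk with heq | hlt
      · rw [heq, W_big t (m+1) (t+1) (by omega), Ff_top t (m+1) (t+1) rfl, Nat.cast_zero]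
      · have hk' : k + 1 ≤ t := by omega
        rw [W_succ t m k hk', Ff_succ, Nat.cast_add, ih k (by omega), ih (k+2) (by omega)]


theorem stmt2 (n t : ℕ) (hn : 1 ≤ n) :
    (A n t : ℝ) =
      (1 / (t+2)) * ∑ j ∈ Finset.Icc 1 ((t+1)/2),
        4^(n+1) * Real.sin (j * Real.pi / (t+2))^2
          * Real.cos (j * Real.pi / (t+2))^(2*n) := by
  have h1 : (A n t : ℝ) = Ff t (2*n) 0 := by
    rw [A_eq_W n t hn]
    exact W_eq_F t (2*n) 0 (by omega)
  rw [h1, Ff]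
  simp only [Nat.cast_zero, zero_add, one_mul]
  have h2 : ∀ j ∈ Icc 1 (t+1), (2*Real.cos (th t j))^(2*n) * Real.sin (th t j)
      * Real.sin (th t j)
      = (4:ℝ)^n * (Real.sin (th t j)^2 * Real.cos (th t j)^(2*n)) := by
    intro j _
    rw [mul_pow, show (2:ℝ)^(2*n) = 4^n by rw [pow_mul]; norm_num]
    ring
  rw [Finset.sum_congr rfl h2, ← Finset.mul_sum, fold t n hn]
  have h3 : ∀ j ∈ Icc 1 ((t+1)/2), (4:ℝ)^(n+1) * Real.sin ((j:ℝ) * π / ((t:ℝ)+2))^2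
      * Real.cos ((j:ℝ) * π / ((t:ℝ)+2))^(2*n)
      = (4 * 4^n) * (Real.sin (th t j)^2 * Real.cos (th t j)^(2*n)) := by
    intro j _
    rw [th, pow_succ]
    ring
  rw [Finset.sum_congr rfl h3, ← Finset.mul_sum]
  ring
end

section
/- (Sock Matching Theorem, first alternative) For n ≥ 1 and k ≥ 1, B_{n,k} = Σ_{i=1}^{n} ( B_{i-1,k-1} C_{n-i} + C_{i-1} B_{n-i,k} − B_{i-1,k-1} B_{n-i,k} ), where B_{0,0} = 1 and B_{0,k} = 0 for k ≥ 1. -/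
open Finset Real Filter

def DSeq (m : ℕ) (a : ℕ → ℕ) : Prop :=
  if m = 0 then a = (fun _ => 0) else IsDyckSeq m a

lemma dseq_zero_iff (a : ℕ → ℕ) : DSeq 0 a ↔ a = (fun _ => 0) := by simp [DSeq]

lemma dseq_pos_iff {m : ℕ} (hm : m ≠ 0) (a : ℕ → ℕ) : DSeq m a ↔ IsDyckSeq m a := by
  simp [DSeq, hm]

lemma DSeq.apply_zero {m a} (h : DSeq m a) : a 0 = 0 := by
  rcases Nat.eq_zero_or_pos m with rfl | hm
  · rw [dseq_zero_iff] at h; simp [h]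
  · rw [dseq_pos_iff hm.ne'] at h; exact h.2.2.2.1

lemma DSeq.pad {m a} (h : DSeq m a) : ∀ j, 2*m < j → a j = 0 := by
  rcases Nat.eq_zero_or_pos m with rfl | hm
  · rw [dseq_zero_iff] at h; simp [h]
  · rw [dseq_pos_iff hm.ne'] at h; exact h.2.2.2.2

lemma DSeq.endpoint {m a} (h : DSeq m a) : a (2*m) = 0 := by
  rcases Nat.eq_zero_or_pos m with rfl | hm
  · rw [dseq_zero_iff] at h; simp [h]
  · rw [dseq_pos_iff hm.ne'] at h; exact h.2.1

lemma DSeq.le_self {m a} (h : DSeq m a) : ∀ j, a j ≤ j := by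
  rcases Nat.eq_zero_or_pos m with rfl | hm
  · rw [dseq_zero_iff] at h; simp [h]
  · rw [dseq_pos_iff hm.ne'] at h
    obtain ⟨h1, h2n, hstep, h0, hpad⟩ := h
    intro j
    induction j with
    | zero => simp [h0]
    | succ j ih =>
      rcases Nat.lt_or_ge j (2*m) with hj | hj
      · rcases Nat.eq_zero_or_pos j with rfl | hj1
        · simp [h1]
        · rcases hstep j hj1 hj with hs | hs <;> omega
      · have : a (j+1) = 0 := hpad _ (by omega)
        omega

instance dseq_base_finite (m : ℕ) : Finite {a : ℕ → ℕ // DSeq m a} := by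
  apply Finite.of_injective
    (fun x => (fun j : Fin (2*m+1) => (⟨x.1 j, by
      have := x.2.le_self j; have := j.2; omega⟩ : Fin (2*m+1))))
  intro x y hxy
  ext j
  rcases le_or_gt j (2*m) with hj | hj
  · have := congrFun hxy ⟨j, by omega⟩
    simpa [Fin.ext_iff] using this
  · rw [x.2.pad j (by omega), y.2.pad j (by omega)]

instance dseq_finite (m : ℕ) (W : (ℕ → ℕ) → Prop) :
    Finite {a : ℕ → ℕ // DSeq m a ∧ W a} := by
  apply Finite.of_injective
    (fun x => (⟨x.1, x.2.1⟩ : {a : ℕ → ℕ // DSeq m a}))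
  intro x y hxy
  simpa [Subtype.ext_iff] using hxy

lemma IsDyckSeq.parity {n a} (ha : IsDyckSeq n a) : ∀ m, m ≤ 2*n → (a m + m) % 2 = 0 := by
  obtain ⟨h1, h2n, hstep, h0, hpad⟩ := ha
  intro m
  induction m with
  | zero => simp [h0]
  | succ m ih =>
    intro hm
    rcases Nat.eq_zero_or_pos m with rfl | hm1
    · simp [h1]
    · have := ih (by omega)
      rcases hstep m hm1 (by omega) with hs | hs <;> omega

def pPart (a : ℕ → ℕ) (t : ℕ) : ℕ → ℕ :=
  fun j => if 1 ≤ j ∧ j + 1 < t then a (j+1) - 1 else 0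

def qPart (a : ℕ → ℕ) (t n : ℕ) : ℕ → ℕ :=
  fun j => if 1 ≤ j ∧ j + t ≤ 2*n then a (j + t) else 0

def glue (i : ℕ) (p q : ℕ → ℕ) : ℕ → ℕ :=
  fun m => if m = 0 then 0 else if m ≤ 2*i+1 then p (m-1) + 1 else q (m - (2*i+2))

section Decomp

variable {n : ℕ} {a : ℕ → ℕ}
variable {t : ℕ}

lemma pPart_dseq (hn : 1 ≤ n) (ha : IsDyckSeq n a)
    (htz : a t = 0) (htmin : ∀ m, 0 < m → m < t → a m ≠ 0)
    (hteq : t = 2 * (t/2 - 1) + 2) (htle : t ≤ 2*n) :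
    DSeq (t/2 - 1) (pPart a t) := by
  obtain ⟨ha1, ha2n, hstep, ha0, hapad⟩ := ha
  set i := t/2 - 1 with hi
  rcases Nat.eq_zero_or_pos i with hi0 | hip
  · rw [hi0, dseq_zero_iff]
    funext j
    simp only [pPart]
    rw [if_neg (by omega)]
  · rw [dseq_pos_iff hip.ne']
    refine ⟨?_, ?_, ?_, ?_, ?_⟩
    · -- pPart a t 1 = 1
      simp only [pPart]
      rw [if_pos (by omega)]
      have h2 : a (1+1) = 2 := by
        rcases hstep 1 le_rfl (by omega) with hs | hs
        · omega
        · exfalso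
          exact htmin (1+1) (by omega) (by omega) (by omega)
      omega
    · -- endpoint
      simp only [pPart]
      rw [if_pos (by omega)]
      have h1 : a (2*i + 1) = 1 := by
        have hst := hstep (2*i+1) (by omega) (by omega)
        have h2 : a (2*i+1+1) = 0 := by
          have : 2*i+1+1 = t := by omega
          rw [this]; exact htz
        have h3 : a (2*i+1) ≠ 0 := htmin _ (by omega) (by omega)
        omega
      omega
    · -- steps
      intro j hj1 hj2
      simp only [pPart]
      rw [if_pos (by omega), if_pos (by omega)]
      have hv1 : a (j+1) ≠ 0 := htmin _ (by omega) (by omega)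
      have hv2 : a (j+1+1) ≠ 0 := htmin _ (by omega) (by omega)
      rcases hstep (j+1) (by omega) (by omega) with hs | hs <;> omega
    · simp [pPart]
    · intro j hj
      simp only [pPart]
      rw [if_neg (by omega)]

lemma qPart_dseq (hn : 1 ≤ n) (ha : IsDyckSeq n a)
    (htz : a t = 0) (htmin : ∀ m, 0 < m → m < t → a m ≠ 0)
    (hteq : t = 2 * (t/2 - 1) + 2) (htle : t ≤ 2*n) :
    DSeq (n - 1 - (t/2 - 1)) (qPart a t n) := by
  obtain ⟨ha1, ha2n, hstep, ha0, hapad⟩ := ha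
  set i := t/2 - 1 with hi
  set m' := n - 1 - i with hm'
  have h2m' : 2*m' = 2*n - t := by omega
  rcases Nat.eq_zero_or_pos m' with hm0 | hmp
  · rw [hm0, dseq_zero_iff]
    funext j
    simp only [qPart]
    rw [if_neg (by omega)]
  · rw [dseq_pos_iff hmp.ne']
    refine ⟨?_, ?_, ?_, ?_, ?_⟩
    · -- q 1 = 1
      simp only [qPart]
      rw [if_pos (by omega)]
      have hst := hstep t (by omega) (by omega)
      have : 1 + t = t + 1 := by omega
      rw [this]; omega
    · -- endpoint
      simp only [qPart]
      rw [if_pos (by omega)]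
      have : 2*m' + t = 2*n := by omega
      rw [this]; exact ha2n
    · -- steps
      intro j hj1 hj2
      simp only [qPart]
      rw [if_pos (by omega), if_pos (by omega)]
      have hst := hstep (j + t) (by omega) (by omega)
      have he : j + 1 + t = j + t + 1 := by omega
      rw [he]; exact hst
    · simp [qPart]
    · intro j hj
      simp only [qPart]
      rw [if_neg (by omega)]

lemma glue_parts (hn : 1 ≤ n) (ha : IsDyckSeq n a)
    (htz : a t = 0) (htmin : ∀ m, 0 < m → m < t → a m ≠ 0)
    (hteq : t = 2 * (t/2 - 1) + 2) (htle : t ≤ 2*n) :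
    glue (t/2 - 1) (pPart a t) (qPart a t n) = a := by
  obtain ⟨ha1, ha2n, hstep, ha0, hapad⟩ := ha
  set i := t/2 - 1 with hi
  funext m
  simp only [glue, pPart, qPart]
  rcases Nat.eq_zero_or_pos m with rfl | hm0
  · simp [ha0]
  rw [if_neg (by omega)]
  rcases le_or_gt m (2*i+1) with hm1 | hm1
  · rw [if_pos hm1]
    rcases Nat.lt_or_ge m 2 with hm2 | hm2
    · have : m = 1 := by omega
      subst this
      rw [if_neg (by omega)]
      omega
    · rw [if_pos (by omega)]
      have hne : a m ≠ 0 := htmin m (by omega) (by omega)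
      have : m - 1 + 1 = m := by omega
      rw [this]; omega
  · rw [if_neg (by omega)]
    rcases Nat.eq_or_lt_of_le (show 2*i+2 ≤ m by omega) with hm2 | hm2
    · rw [if_neg (by omega)]
      have : m = t := by omega
      rw [this]; omega
    · rcases le_or_gt m (2*n) with hm3 | hm3
      · rw [if_pos (by omega)]
        have : m - (2*i+2) + t = m := by omega
        rw [this]
      · rw [if_neg (by omega)]
        rw [hapad m (by omega)]

end Decomp

section Glue

variable {n i : ℕ} {p q : ℕ → ℕ}

lemma glue_isDyck (hn : 1 ≤ n) (hi : i < n)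
    (hp : DSeq i p) (hq : DSeq (n - 1 - i) q) :
    IsDyckSeq n (glue i p q) := by
  have hp0 := hp.apply_zero
  have hpe := hp.endpoint
  have hppad := hp.pad
  have hq0 := hq.apply_zero
  have hqe := hq.endpoint
  have hqpad := hq.pad
  refine ⟨?_, ?_, ?_, ?_, ?_⟩
  · simp only [glue]
    rw [if_neg (by omega), if_pos (by omega)]
    simp [hp0]
  · simp only [glue]
    rw [if_neg (by omega), if_neg (by omega)]
    have : 2*n - (2*i+2) = 2*(n-1-i) := by omega
    rw [this]; exact hqe
  · intro m hm1 hm2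
    simp only [glue]
    rcases le_or_gt (m+1) (2*i+1) with hc1 | hc1
    · -- both in p part
      rw [if_neg (by omega), if_pos (by omega), if_neg (by omega), if_pos (by omega)]
      have hip : 1 ≤ i := by omega
      rw [dseq_pos_iff (by omega)] at hp
      obtain ⟨hp1, hpe', hpstep, hp0', hppad'⟩ := hp
      rcases Nat.lt_or_ge m 2 with hm3 | hm3
      · have hm : m = 1 := by omega
        subst hm
        norm_num
        rw [hp0, hp1]
        omega
      · have he : m - 1 + 1 = m := by omega
        have hs := hpstep (m-1) (by omega) (by omega)
        rw [he] at hs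
        have he2 : m + 1 - 1 = m := by omega
        rw [he2]
        omega
    · rcases Nat.eq_or_lt_of_le (show 2*i+1 ≤ m by omega) with hc2 | hc2
      · -- m = 2i+1 : step down to zero
        rw [if_neg (by omega), if_neg (by omega), if_neg (by omega), if_pos (by omega)]
        right
        have : m + 1 - (2*i+2) = 0 := by omega
        rw [this, hq0]
        have : m - 1 = 2*i := by omega
        rw [this, hpe]
      · rcases Nat.eq_or_lt_of_le (show 2*i+2 ≤ m by omega) with hc3 | hc3
        · -- m = 2i+2 : step up from zero
          rw [if_neg (by omega), if_neg (by omega), if_neg (by omega), if_neg (by omega)]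
          left
          have hmq : 1 ≤ n - 1 - i := by omega
          rw [dseq_pos_iff (by omega)] at hq
          have h1 : m + 1 - (2*i+2) = 1 := by omega
          have h0 : m - (2*i+2) = 0 := by omega
          rw [h1, h0, hq.1, hq.2.2.2.1]
        · -- both in q part
          rw [if_neg (by omega), if_neg (by omega), if_neg (by omega), if_neg (by omega)]
          have hmq : 1 ≤ n - 1 - i := by omega
          rw [dseq_pos_iff (by omega)] at hq
          have hs := hq.2.2.1 (m - (2*i+2)) (by omega) (by omega)
          have he : m - (2*i+2) + 1 = m + 1 - (2*i+2) := by omega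
          rw [he] at hs
          exact hs
  · simp [glue]
  · intro m hm
    simp only [glue]
    rw [if_neg (by omega), if_neg (by omega)]
    exact hqpad _ (by omega)

lemma glue_firstreturn (hn : 1 ≤ n) (hi : i < n)
    (hp : DSeq i p) (hq : DSeq (n - 1 - i) q) :
    glue i p q (2*i+2) = 0 ∧ ∀ m, 0 < m → m < 2*i+2 → glue i p q m ≠ 0 := by
  constructor
  · simp only [glue]
    rw [if_neg (by omega), if_neg (by omega)]
    have : 2*i+2 - (2*i+2) = 0 := by omega
    rw [this]; exact hq.apply_zero
  · intro m hm1 hm2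
    simp only [glue]
    rw [if_neg (by omega), if_pos (by omega)]
    omega

lemma pPart_glue (hn : 1 ≤ n) (hi : i < n)
    (hp : DSeq i p) (hq : DSeq (n - 1 - i) q) :
    pPart (glue i p q) (2*i+2) = p := by
  funext j
  simp only [pPart, glue]
  rcases le_or_gt 1 j with hj1 | hj1
  · rcases le_or_gt (j+2) (2*i+2) with hj2 | hj2
    · rw [if_pos (by omega), if_neg (by omega), if_pos (by omega)]
      simp
    · rw [if_neg (by omega)]
      rw [hp.pad j (by omega)]
  · rw [if_neg (by omega)]
    have : j = 0 := by omega
    rw [this, hp.apply_zero]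

lemma qPart_glue (hn : 1 ≤ n) (hi : i < n)
    (hp : DSeq i p) (hq : DSeq (n - 1 - i) q) :
    qPart (glue i p q) (2*i+2) n = q := by
  funext j
  simp only [qPart, glue]
  rcases le_or_gt 1 j with hj1 | hj1
  · rcases le_or_gt (j + (2*i+2)) (2*n) with hj2 | hj2
    · rw [if_pos (by omega), if_neg (by omega), if_neg (by omega)]
      have : j + (2*i+2) - (2*i+2) = j := by omega
      rw [this]
    · rw [if_neg (by omega)]
      rw [hq.pad j (by omega)]
  · rw [if_neg (by omega)]
    have : j = 0 := by omega
    rw [this, hq.apply_zero]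

lemma glue_height (hn : 1 ≤ n) (hi : i < n)
    (hp : DSeq i p) (hq : DSeq (n - 1 - i) q) {k : ℕ} (hk : 1 ≤ k) :
    (∃ m, k ≤ glue i p q m) ↔ (∃ j, k - 1 ≤ p j) ∨ (∃ j, k ≤ q j) := by
  constructor
  · rintro ⟨m, hm⟩
    simp only [glue] at hm
    rcases Nat.eq_zero_or_pos m with rfl | hm0
    · rw [if_pos rfl] at hm; omega
    rcases le_or_gt m (2*i+1) with hm1 | hm1
    · rw [if_neg (by omega), if_pos (by omega)] at hm
      exact Or.inl ⟨m-1, by omega⟩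
    · rw [if_neg (by omega), if_neg (by omega)] at hm
      exact Or.inr ⟨m - (2*i+2), hm⟩
  · rintro (⟨j, hj⟩ | ⟨j, hj⟩)
    · rcases Nat.eq_zero_or_pos (p j) with hpj | hpj
      · -- k = 1, use position 1
        refine ⟨1, ?_⟩
        simp only [glue]
        rw [if_neg (by omega), if_pos (by omega)]
        omega
      · have hj1 : 1 ≤ j := by
          rcases Nat.eq_zero_or_pos j with rfl | h
          · rw [hp.apply_zero] at hpj; omega
          · exact h
        have hj2 : j ≤ 2*i := by
          by_contra h
          rw [hp.pad j (by omega)] at hpj; omega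
        refine ⟨j+1, ?_⟩
        simp only [glue]
        rw [if_neg (by omega), if_pos (by omega)]
        simp only [Nat.add_sub_cancel]
        omega
    · have hqj : 1 ≤ q j := by omega
      have hj1 : 1 ≤ j := by
        rcases Nat.eq_zero_or_pos j with rfl | h
        · rw [hq.apply_zero] at hqj; omega
        · exact h
      have hj2 : j ≤ 2*(n-1-i) := by
        by_contra h
        rw [hq.pad j (by omega)] at hqj; omega
      refine ⟨j + (2*i+2), ?_⟩
      simp only [glue]
      rw [if_neg (by omega), if_neg (by omega)]
      have : j + (2*i+2) - (2*i+2) = j := by omega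
      rw [this]; exact hj

end Glue

noncomputable def frt {n : ℕ} {a : ℕ → ℕ} (hn : 1 ≤ n) (ha : IsDyckSeq n a) : ℕ :=
  Nat.find (show ∃ m, 0 < m ∧ a m = 0 from ⟨2*n, by omega, ha.2.1⟩)

lemma frt_spec {n : ℕ} {a : ℕ → ℕ} (hn : 1 ≤ n) (ha : IsDyckSeq n a) :
    0 < frt hn ha ∧ a (frt hn ha) = 0 ∧ (∀ m, 0 < m → m < frt hn ha → a m ≠ 0) ∧
    frt hn ha ≤ 2*n ∧ frt hn ha = 2*(frt hn ha/2 - 1) + 2 ∧ frt hn ha/2 - 1 < n := by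
  have h1 : 0 < frt hn ha ∧ a (frt hn ha) = 0 := by
    unfold frt; exact Nat.find_spec (show ∃ m, 0 < m ∧ a m = 0 from ⟨2*n, by omega, ha.2.1⟩)
  have h2 : ∀ m, 0 < m → m < frt hn ha → a m ≠ 0 := by
    unfold frt
    intro m hm1 hm2 hz
    exact Nat.find_min (show ∃ m, 0 < m ∧ a m = 0 from ⟨2*n, by omega, ha.2.1⟩) hm2 ⟨hm1, hz⟩
  have h3 : frt hn ha ≤ 2*n := by
    unfold frt; exact Nat.find_min' (show ∃ m, 0 < m ∧ a m = 0 from ⟨2*n, by omega, ha.2.1⟩) ⟨by omega, ha.2.1⟩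
  have h4 := ha.parity (frt hn ha) h3
  have h5 : frt hn ha ≠ 1 := by
    intro h
    rw [h] at h1
    rw [ha.1] at h1
    omega
  refine ⟨h1.1, h1.2, h2, h3, by omega, by omega⟩

lemma frt_glue {n i : ℕ} {p q : ℕ → ℕ} (hn : 1 ≤ n) (hi : i < n)
    (hp : DSeq i p) (hq : DSeq (n - 1 - i) q) (ha : IsDyckSeq n (glue i p q)) :
    frt hn ha = 2*i+2 := by
  have hfr := glue_firstreturn hn hi hp hq
  rw [frt, Nat.find_eq_iff]
  exact ⟨⟨by omega, hfr.1⟩, fun m hm hc => hfr.2 m hc.1 hm hc.2⟩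

lemma nat_card_sigma {m : ℕ} (G : Fin m → Type*) [∀ i, Finite (G i)] :
    Nat.card ((i : Fin m) × G i) = ∑ i, Nat.card (G i) := by
  haveI : ∀ i, Fintype (G i) := fun i => Fintype.ofFinite _
  simp [Nat.card_eq_fintype_card]

lemma card_fiber (n : ℕ) (hn : 1 ≤ n) (W : (ℕ → ℕ) → Prop) (Up Uq : ℕ → (ℕ → ℕ) → Prop)
    (hW : ∀ i, i < n → ∀ p q, DSeq i p → DSeq (n-1-i) q →
      (W (glue i p q) ↔ Up i p ∨ Uq i q)) (i : ℕ) (hi : i < n) :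
    Nat.card {x : {a : ℕ → ℕ // DSeq n a ∧ W a} //
        frt hn ((dseq_pos_iff (by omega) x.1).mp x.2.1) = 2*i+2} =
    Nat.card {pq : (ℕ → ℕ) × (ℕ → ℕ) //
        (DSeq i pq.1 ∧ DSeq (n-1-i) pq.2) ∧ (Up i pq.1 ∨ Uq i pq.2)} := by
  apply Nat.card_congr
  refine ⟨fun x => ⟨(pPart x.1.1 (2*i+2), qPart x.1.1 (2*i+2) n), ?_⟩,
    fun y => ⟨⟨glue i y.1.1 y.1.2, ?_, ?_⟩, ?_⟩, ?_, ?_⟩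
  · -- forward proofs
    obtain ⟨⟨a, hda, hwa⟩, hfx⟩ := x
    have hdy : IsDyckSeq n a := (dseq_pos_iff (by omega) a).mp hda
    have hs := frt_spec hn hdy
    rw [hfx] at hs
    have hidx : (2*i+2)/2 - 1 = i := by omega
    have hp := pPart_dseq hn hdy hs.2.1 hs.2.2.1 (by omega) hs.2.2.2.1
    have hq := qPart_dseq hn hdy hs.2.1 hs.2.2.1 (by omega) hs.2.2.2.1
    rw [hidx] at hp hq
    refine ⟨⟨hp, hq⟩, ?_⟩
    have hg := glue_parts hn hdy hs.2.1 hs.2.2.1 (by omega) hs.2.2.2.1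
    rw [hidx] at hg
    exact (hW i hi _ _ hp hq).mp (by rw [hg]; exact hwa)
  · -- glue is DSeq n
    exact (dseq_pos_iff (by omega) _).mpr (glue_isDyck hn hi y.2.1.1 y.2.1.2)
  · -- glue satisfies W
    exact (hW i hi _ _ y.2.1.1 y.2.1.2).mpr y.2.2
  · -- first return of glue
    exact frt_glue hn hi y.2.1.1 y.2.1.2 _
  · -- left inverse
    rintro ⟨⟨a, hda, hwa⟩, hfx⟩
    apply Subtype.ext
    apply Subtype.ext
    show glue i _ _ = a
    have hdy : IsDyckSeq n a := (dseq_pos_iff (by omega) a).mp hda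
    have hs := frt_spec hn hdy
    simp only at hfx
    rw [hfx] at hs
    have hidx : (2*i+2)/2 - 1 = i := by omega
    have hg := glue_parts hn hdy hs.2.1 hs.2.2.1 (by omega) hs.2.2.2.1
    rw [hidx] at hg
    exact hg
  · -- right inverse
    rintro ⟨⟨p, q⟩, ⟨hp, hq⟩, hor⟩
    apply Subtype.ext
    show (pPart (glue i p q) (2*i+2), qPart (glue i p q) (2*i+2) n) = (p, q)
    rw [pPart_glue hn hi hp hq, qPart_glue hn hi hp hq]

lemma card_split (n : ℕ) (hn : 1 ≤ n) (W : (ℕ → ℕ) → Prop)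
    (Up Uq : ℕ → (ℕ → ℕ) → Prop)
    (hW : ∀ i, i < n → ∀ p q, DSeq i p → DSeq (n-1-i) q →
      (W (glue i p q) ↔ Up i p ∨ Uq i q)) :
    Nat.card {a : ℕ → ℕ // DSeq n a ∧ W a} =
      ∑ i ∈ Finset.range n, Nat.card {pq : (ℕ → ℕ) × (ℕ → ℕ) //
        (DSeq i pq.1 ∧ DSeq (n-1-i) pq.2) ∧ (Up i pq.1 ∨ Uq i pq.2)} := by
  classical
  set f : {a : ℕ → ℕ // DSeq n a ∧ W a} → Fin n := fun x =>
    ⟨frt hn ((dseq_pos_iff (by omega : n ≠ 0) x.1).mp x.2.1) / 2 - 1,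
      (frt_spec hn _).2.2.2.2.2⟩ with hf
  rw [← Nat.card_congr (Equiv.sigmaFiberEquiv f), nat_card_sigma,
    ← Fin.sum_univ_eq_sum_range]
  apply Finset.sum_congr rfl
  intro i _
  rw [← card_fiber n hn W Up Uq hW i i.2]
  apply Nat.card_congr
  apply Equiv.subtypeEquivRight
  intro x
  have hs := frt_spec hn ((dseq_pos_iff (by omega : n ≠ 0) x.1).mp x.2.1)
  constructor
  · intro h
    rw [hf] at h
    have := congrArg Fin.val h
    simp only at this
    omega
  · intro h
    rw [hf]
    apply Fin.ext
    simp only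
    omega

lemma ncard_prod_eq (s t : Set (ℕ → ℕ)) :
    (s ×ˢ t).ncard = s.ncard * t.ncard := by
  rw [← Nat.card_coe_set_eq, ← Nat.card_coe_set_eq, ← Nat.card_coe_set_eq,
    Nat.card_congr (Equiv.Set.prod s t), Nat.card_prod]

lemma card_prod_or (i m : ℕ) (U V : (ℕ → ℕ) → Prop) :
    (Nat.card {pq : (ℕ → ℕ) × (ℕ → ℕ) //
        (DSeq i pq.1 ∧ DSeq m pq.2) ∧ (U pq.1 ∨ V pq.2)} : ℤ) =
      (Nat.card {a : ℕ → ℕ // DSeq i a ∧ U a} : ℤ) * Nat.card {a : ℕ → ℕ // DSeq m a} +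
      (Nat.card {a : ℕ → ℕ // DSeq i a} : ℤ) * Nat.card {a : ℕ → ℕ // DSeq m a ∧ V a} -
      (Nat.card {a : ℕ → ℕ // DSeq i a ∧ U a} : ℤ) *
        Nat.card {a : ℕ → ℕ // DSeq m a ∧ V a} := by
  classical
  set X : Set (ℕ → ℕ) := {a | DSeq i a ∧ U a} with hX
  set S : Set (ℕ → ℕ) := {a | DSeq i a} with hS
  set Y : Set (ℕ → ℕ) := {a | DSeq m a ∧ V a} with hY
  set T : Set (ℕ → ℕ) := {a | DSeq m a} with hT
  have hXf : X.Finite := Set.finite_coe_iff.mp (dseq_finite i U)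
  have hSf : S.Finite := Set.finite_coe_iff.mp (dseq_base_finite i)
  have hYf : Y.Finite := Set.finite_coe_iff.mp (dseq_finite m V)
  have hTf : T.Finite := Set.finite_coe_iff.mp (dseq_base_finite m)
  have key : {pq : (ℕ → ℕ) × (ℕ → ℕ) | (DSeq i pq.1 ∧ DSeq m pq.2) ∧ (U pq.1 ∨ V pq.2)}
      = (X ×ˢ T) ∪ (S ×ˢ Y) := by
    ext pq
    simp only [Set.mem_setOf_eq, Set.mem_union, Set.mem_prod, hX, hS, hY, hT]
    tauto
  have key2 : (X ×ˢ T) ∩ (S ×ˢ Y) = X ×ˢ Y := by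
    ext pq
    simp only [Set.mem_inter_iff, Set.mem_prod, Set.mem_setOf_eq, hX, hS, hY, hT]
    tauto
  have hinc := Set.ncard_union_add_ncard_inter (X ×ˢ T) (S ×ˢ Y)
    (hXf.prod hTf) (hSf.prod hYf)
  rw [key2, ncard_prod_eq, ncard_prod_eq, ncard_prod_eq] at hinc
  have hL : Nat.card {pq : (ℕ → ℕ) × (ℕ → ℕ) //
      (DSeq i pq.1 ∧ DSeq m pq.2) ∧ (U pq.1 ∨ V pq.2)} = ((X ×ˢ T) ∪ (S ×ˢ Y)).ncard := by
    rw [← key, ← Nat.card_coe_set_eq]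
    rfl
  have e1 : Nat.card {a : ℕ → ℕ // DSeq i a ∧ U a} = X.ncard :=
    (Nat.card_coe_set_eq X).symm ▸ rfl
  have e2 : Nat.card {a : ℕ → ℕ // DSeq i a} = S.ncard := (Nat.card_coe_set_eq S).symm ▸ rfl
  have e3 : Nat.card {a : ℕ → ℕ // DSeq m a ∧ V a} = Y.ncard :=
    (Nat.card_coe_set_eq Y).symm ▸ rfl
  have e4 : Nat.card {a : ℕ → ℕ // DSeq m a} = T.ncard := (Nat.card_coe_set_eq T).symm ▸ rfl
  rw [hL, e1, e2, e3, e4]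
  push_cast
  omega

instance dseq0_unique : Unique {a : ℕ → ℕ // DSeq 0 a} where
  default := ⟨fun _ => 0, by rw [dseq_zero_iff]⟩
  uniq := fun x => Subtype.ext ((dseq_zero_iff _).mp x.2)

lemma card_dseq : ∀ m : ℕ, Nat.card {a : ℕ → ℕ // DSeq m a} = catalan m := by
  intro m
  induction m using Nat.strong_induction_on with
  | _ m ih =>
    match m with
    | 0 => simp [Nat.card_unique, catalan_zero]
    | Nat.succ m =>
      have h0 : Nat.card {a : ℕ → ℕ // DSeq (m+1) a} =
          Nat.card {a : ℕ → ℕ // DSeq (m+1) a ∧ True} :=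
        Nat.card_congr (Equiv.subtypeEquivRight (by simp))
      rw [h0, card_split (m+1) (by omega) (fun _ => True) (fun _ _ => True) (fun _ _ => False)
        (by intro i hi p q hp hq; simp)]
      rw [catalan_succ']
      rw [Nat.sum_antidiagonal_eq_sum_range_succ (fun x y => catalan x * catalan y) m]
      apply Finset.sum_congr rfl
      intro i hi
      simp only [Finset.mem_range] at hi
      have e1 : m + 1 - 1 - i = m - i := by omega
      rw [e1]
      have h1 : Nat.card {pq : (ℕ → ℕ) × (ℕ → ℕ) //
          (DSeq i pq.1 ∧ DSeq (m-i) pq.2) ∧ (True ∨ False)} =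
          Nat.card ({a : ℕ → ℕ // DSeq i a} × {a : ℕ → ℕ // DSeq (m-i) a}) := by
        apply Nat.card_congr
        exact (Equiv.subtypeEquivRight (by simp)).trans Equiv.subtypeProdEquivProd
      rw [h1, Nat.card_prod, ih i (by omega), ih (m-i) (by omega)]

lemma C_eq_catalan (m : ℕ) : C m = catalan m := by
  rw [C, catalan_eq_centralBinom_div, Nat.centralBinom]

lemma B_eq_card (m k : ℕ) :
    B m k = Nat.card {a : ℕ → ℕ // DSeq m a ∧ ∃ i, k ≤ a i} := by
  rcases Nat.eq_zero_or_pos m with rfl | hm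
  · rcases Nat.eq_zero_or_pos k with rfl | hk
    · haveI : Unique {a : ℕ → ℕ // DSeq 0 a ∧ ∃ i, 0 ≤ a i} :=
        { default := ⟨fun _ => 0, by rw [dseq_zero_iff], ⟨0, le_rfl⟩⟩
          uniq := fun x => Subtype.ext ((dseq_zero_iff _).mp x.2.1) }
      simp [B, Nat.card_unique]
    · haveI : IsEmpty {a : ℕ → ℕ // DSeq 0 a ∧ ∃ i, k ≤ a i} := by
        constructor
        rintro ⟨a, ha, ⟨i, hi⟩⟩
        have hz : a i = 0 := by simpa using congrFun ((dseq_zero_iff a).mp ha) i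
        omega
      simp [B, Nat.card_of_isEmpty, hk.ne']
  · have : B m k = Nat.card {a : ℕ → ℕ // IsDyckSeq m a ∧ ∃ i, k ≤ a i} := by
      rw [B, if_neg (by omega)]
    rw [this]
    apply Nat.card_congr
    apply Equiv.subtypeEquivRight
    intro a
    have h := dseq_pos_iff hm.ne' a
    tauto

/-- the Sock Matching Theorem, first alternative. -/
theorem stmt7 (n k : ℕ) (hn : 1 ≤ n) (hk : 1 ≤ k) :
    (B n k : ℤ) = ∑ i ∈ Finset.Icc 1 n,
      ((B (i-1) (k-1) : ℤ) * C (n-i) + (C (i-1) : ℤ) * B (n-i) k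
        - (B (i-1) (k-1) : ℤ) * B (n-i) k) := by
  have hW : ∀ i, i < n → ∀ p q, DSeq i p → DSeq (n-1-i) q →
      ((∃ m, k ≤ glue i p q m) ↔ (∃ j, k-1 ≤ p j) ∨ (∃ j, k ≤ q j)) :=
    fun i hi p q hp hq => glue_height hn hi hp hq hk
  have hsum := card_split n hn (fun a => ∃ m, k ≤ a m)
    (fun _ p => ∃ j, k-1 ≤ p j) (fun _ q => ∃ j, k ≤ q j) hW
  rw [B_eq_card n k, hsum]
  rw [← Finset.Ico_add_one_right_eq_Icc, Finset.sum_Ico_eq_sum_range]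
  have hr : n + 1 - 1 = n := Nat.add_sub_cancel n 1
  rw [hr]
  push_cast
  apply Finset.sum_congr rfl
  intro i hi
  simp only [Finset.mem_range] at hi
  clear hsum hW
  rw [card_prod_or i (n-1-i) (fun p => ∃ j, k-1 ≤ p j) (fun q => ∃ j, k ≤ q j)]
  have e1 : 1 + i - 1 = i := by omega
  have e2 : n - (1 + i) = n - 1 - i := by omega
  rw [e1, e2, B_eq_card i (k-1), B_eq_card (n-1-i) k, card_dseq i, card_dseq (n-1-i), C_eq_catalan (n-1-i), C_eq_catalan i]
end

section
/- For integers m ≥ N ≥ 1, Σ_{j=0}^{N−1} cos^{2m}(jπ/N) = 2^{1−2m} N ( binomial(2m−1, m−1) + Σ_{p=1}^{⌊m/N⌋} binomial(2m, m − pN) ). -/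
open Finset Real Filter

lemma comb_aux (m N : ℕ) (hN : 1 ≤ N) (hm : N ≤ m) :
    ∑ k ∈ range (2*m+1), (if (N:ℤ) ∣ ((k:ℤ) - m) then ((2*m).choose k) else 0)
      = (2*m).choose m + 2 * ∑ p ∈ Icc 1 (m/N), (2*m).choose (m - p*N) := by
  have hN0 : 0 < N := hN
  have key : ∀ p ∈ Icc 1 (m/N), p * N ≤ m := by
    intro p hp
    exact (Nat.le_div_iff_mul_le hN0).1 (mem_Icc.1 hp).2
  rw [range_eq_Ico, ← Finset.sum_Ico_consecutive _ (Nat.zero_le m) (by omega : m ≤ 2*m+1),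
      ← Finset.sum_Ico_consecutive _ (by omega : m ≤ m+1) (by omega : m+1 ≤ 2*m+1)]
  have hmid : ∑ k ∈ Ico m (m+1), (if (N:ℤ) ∣ ((k:ℤ) - m) then ((2*m).choose k) else 0)
      = (2*m).choose m := by
    rw [Finset.sum_Ico_eq_sum_range]
    simp
  have hlow : ∑ k ∈ Ico 0 m, (if (N:ℤ) ∣ ((k:ℤ) - m) then ((2*m).choose k) else 0)
      = ∑ p ∈ Icc 1 (m/N), (2*m).choose (m - p*N) := by
    rw [← Finset.sum_filter]
    refine Finset.sum_nbij' (fun k => (m - k)/N) (fun p => m - p*N) ?_ ?_ ?_ ?_ ?_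
    · intro k hk
      simp only [Finset.mem_filter, Finset.mem_Ico] at hk
      obtain ⟨⟨-, hk1⟩, hk2⟩ := hk
      have hd : N ∣ (m - k) := by
        have h' : (N:ℤ) ∣ ((m - k : ℕ) : ℤ) := by
          obtain ⟨c, hc⟩ := hk2; exact ⟨-c, by rw [Int.natCast_sub hk1.le, mul_neg, ← hc]; ring⟩
        exact_mod_cast h'
      rw [mem_Icc]
      exact ⟨Nat.one_le_div_iff hN0 |>.2 (Nat.le_of_dvd (by omega) hd),
        Nat.div_le_div_right (by omega)⟩
    · intro p hp
      have hkey := key p hp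
      have hp1 := (mem_Icc.1 hp).1
      have hpN : 0 < p*N := Nat.mul_pos hp1 hN0
      simp only [Finset.mem_filter, Finset.mem_Ico]
      refine ⟨⟨Nat.zero_le _, by omega⟩, ?_⟩
      have h2 : ((m - p*N : ℕ) : ℤ) - m = -(p*N) := by
        have : ((m - p*N : ℕ) : ℤ) = (m:ℤ) - p*N := by push_cast [hkey]; ring
        rw [this]; ring
      rw [h2]
      exact ⟨-p, by push_cast; ring⟩
    · intro k hk
      simp only [Finset.mem_filter, Finset.mem_Ico] at hk
      obtain ⟨⟨-, hk1⟩, hk2⟩ := hk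
      have hd : N ∣ (m - k) := by
        have h' : (N:ℤ) ∣ ((m - k : ℕ) : ℤ) := by
          obtain ⟨c, hc⟩ := hk2; exact ⟨-c, by rw [Int.natCast_sub hk1.le, mul_neg, ← hc]; ring⟩
        exact_mod_cast h'
      show m - (m - k)/N * N = k
      rw [Nat.div_mul_cancel hd]; omega
    · intro p hp
      have hkey := key p hp
      show (m - (m - p*N))/N = p
      have h1 : m - (m - p*N) = p*N := by omega
      rw [h1, Nat.mul_div_cancel _ hN0]
    · intro k hk
      simp only [Finset.mem_filter, Finset.mem_Ico] at hk
      obtain ⟨⟨-, hk1⟩, hk2⟩ := hk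
      have hd : N ∣ (m - k) := by
        have h' : (N:ℤ) ∣ ((m - k : ℕ) : ℤ) := by
          obtain ⟨c, hc⟩ := hk2; exact ⟨-c, by rw [Int.natCast_sub hk1.le, mul_neg, ← hc]; ring⟩
        exact_mod_cast h'
      show (2*m).choose k = (2*m).choose (m - (m - k)/N * N)
      rw [Nat.div_mul_cancel hd]
      congr 1; omega
  have hhigh : ∑ k ∈ Ico (m+1) (2*m+1), (if (N:ℤ) ∣ ((k:ℤ) - m) then ((2*m).choose k) else 0)
      = ∑ p ∈ Icc 1 (m/N), (2*m).choose (m - p*N) := by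
    rw [← Finset.sum_filter]
    refine Finset.sum_nbij' (fun k => (k - m)/N) (fun p => m + p*N) ?_ ?_ ?_ ?_ ?_
    · intro k hk
      simp only [Finset.mem_filter, Finset.mem_Ico] at hk
      obtain ⟨⟨hk1, hk2⟩, hk3⟩ := hk
      have hd : N ∣ (k - m) := by
        have h' : (N:ℤ) ∣ ((k - m : ℕ) : ℤ) := by rw [Int.natCast_sub (by omega)]; exact hk3
        exact_mod_cast h'
      rw [mem_Icc]
      exact ⟨Nat.one_le_div_iff hN0 |>.2 (Nat.le_of_dvd (by omega) hd),
        Nat.div_le_div_right (by omega)⟩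
    · intro p hp
      have hkey := key p hp
      have hp1 := (mem_Icc.1 hp).1
      have hpN : 0 < p*N := Nat.mul_pos hp1 hN0
      simp only [Finset.mem_filter, Finset.mem_Ico]
      refine ⟨⟨by omega, by omega⟩, ?_⟩
      have h2 : ((m + p*N : ℕ) : ℤ) - m = (p:ℤ)*N := by push_cast; ring
      rw [h2]
      exact ⟨p, by ring⟩
    · intro k hk
      simp only [Finset.mem_filter, Finset.mem_Ico] at hk
      obtain ⟨⟨hk1, hk2⟩, hk3⟩ := hk
      have hd : N ∣ (k - m) := by
        have h' : (N:ℤ) ∣ ((k - m : ℕ) : ℤ) := by rw [Int.natCast_sub (by omega)]; exact hk3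
        exact_mod_cast h'
      show m + (k - m)/N * N = k
      rw [Nat.div_mul_cancel hd]; omega
    · intro p hp
      have hkey := key p hp
      show (m + p*N - m)/N = p
      have h1 : m + p*N - m = p*N := by omega
      rw [h1, Nat.mul_div_cancel _ hN0]
    · intro k hk
      simp only [Finset.mem_filter, Finset.mem_Ico] at hk
      obtain ⟨⟨hk1, hk2⟩, hk3⟩ := hk
      have hd : N ∣ (k - m) := by
        have h' : (N:ℤ) ∣ ((k - m : ℕ) : ℤ) := by rw [Int.natCast_sub (by omega)]; exact hk3
        exact_mod_cast h'
      have hkm : (k-m)/N * N = k - m := Nat.div_mul_cancel hd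
      show (2*m).choose k = (2*m).choose (m - (k - m)/N * N)
      rw [hkm]
      have h2 : m - (k - m) = 2*m - k := by omega
      rw [h2]
      exact (Nat.choose_symm (by omega)).symm
  rw [hlow, hmid, hhigh]; ring

noncomputable def zz (N : ℕ) : ℂ := Complex.exp (2 * Real.pi * Complex.I / N)

lemma geom_aux (N : ℕ) (hN : 1 ≤ N) (d : ℤ) :
    ∑ j ∈ range N, (zz N)^((j:ℤ)*d) = if (N:ℤ) ∣ d then (N:ℂ) else 0 := by
  have hζ : IsPrimitiveRoot (zz N) N := Complex.isPrimitiveRoot_exp N (by omega)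
  have h1 : ∀ j:ℕ, (zz N)^((j:ℤ)*d) = ((zz N)^d)^j := fun j => by
    rw [mul_comm, zpow_mul, zpow_natCast]
  simp_rw [h1]
  by_cases h : (N:ℤ) ∣ d
  · have h2 : (zz N)^d = 1 := (hζ.zpow_eq_one_iff_dvd d).2 h
    simp [h2, h]
  · have h2 : (zz N)^d ≠ 1 := fun hh => h ((hζ.zpow_eq_one_iff_dvd d).1 hh)
    rw [geom_sum_eq h2]
    have h3 : ((zz N)^d)^N = 1 := by
      rw [← zpow_natCast, ← zpow_mul, mul_comm, zpow_mul, zpow_natCast, hζ.pow_eq_one, one_zpow]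
    simp [h3, h]

lemma cos_aux (m N : ℕ) (j : ℕ) :
    (Complex.cos ((j:ℂ) * Real.pi / N))^(2*m)
      = (1/2^(2*m)) * ∑ k ∈ range (2*m+1),
          ((2*m).choose k : ℂ) * (zz N)^((j:ℤ) * ((k:ℤ) - m)) := by
  have hx : Complex.cos ((j:ℂ) * Real.pi / N)
      = (Complex.exp ((j:ℂ) * Real.pi / N * Complex.I)
        + Complex.exp (-((j:ℂ) * Real.pi / N) * Complex.I))/2 := by
    rw [Complex.cos]
  rw [hx, div_pow, add_pow]
  rw [Finset.sum_div, mul_sum]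
  refine Finset.sum_congr rfl ?_
  intro k hk
  simp only [Finset.mem_range] at hk
  have hk' : k ≤ 2*m := by omega
  have he : Complex.exp ((j:ℂ) * Real.pi / N * Complex.I) ^ k *
      Complex.exp (-((j:ℂ) * Real.pi / N) * Complex.I) ^ (2*m - k)
      = (zz N)^((j:ℤ) * ((k:ℤ) - m)) := by
    rw [← Complex.exp_nat_mul, ← Complex.exp_nat_mul, ← Complex.exp_add]
    rw [zz, ← Complex.exp_int_mul]
    congr 1
    have : ((2*m - k : ℕ) : ℂ) = 2*(m:ℂ) - k := by
      push_cast [Nat.cast_sub hk']; ring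
    rw [this]
    push_cast
    field_simp
    ring
  rw [he]
  ring

/-- trigonometric power-sum identity. -/
theorem stmt12 (m N : ℕ) (hN : 1 ≤ N) (hm : N ≤ m) :
    ∑ j ∈ Finset.range N, Real.cos (j * Real.pi / N)^(2*m)
      = (2 : ℝ)^((1 : ℤ) - 2*m) * N *
          (((2*m-1).choose (m-1) : ℝ)
            + ∑ p ∈ Finset.Icc 1 (m/N), ((2*m).choose (m - p*N) : ℝ)) := by
  have hm0 : 0 < m := by omega
  have hch : (2*m).choose m = 2 * ((2*m-1).choose (m-1)) := by
    have h : (2*m-1).succ * (2*m-1).choose (m-1) = (2*m-1).succ.choose (m-1).succ * (m-1).succ :=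
      Nat.add_one_mul_choose_eq (2*m-1) (m-1)
    have e1 : (2*m-1).succ = 2*m := by omega
    have e2 : (m-1).succ = m := by omega
    rw [e1, e2] at h
    have h2 : m * ((2*m).choose m) = m * (2 * ((2*m-1).choose (m-1))) := by
      linarith [h]
    exact Nat.eq_of_mul_eq_mul_left hm0 h2
  apply Complex.ofReal_injective
  push_cast [Complex.ofReal_cos]
  calc ∑ j ∈ range N, (Complex.cos ((j:ℂ) * Real.pi / N))^(2*m)
      = ∑ j ∈ range N, (1/2^(2*m)) * ∑ k ∈ range (2*m+1),
          ((2*m).choose k : ℂ) * (zz N)^((j:ℤ) * ((k:ℤ) - m)) := by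
        exact Finset.sum_congr rfl fun j _ => cos_aux m N j
    _ = (1/2^(2*m)) * ∑ k ∈ range (2*m+1), ((2*m).choose k : ℂ) *
          ∑ j ∈ range N, (zz N)^((j:ℤ) * ((k:ℤ) - m)) := by
        rw [← Finset.mul_sum, Finset.sum_comm]
        congr 1
        exact Finset.sum_congr rfl fun k _ => (Finset.mul_sum _ _ _).symm
    _ = (1/2^(2*m)) * ∑ k ∈ range (2*m+1), ((2*m).choose k : ℂ) *
          (if (N:ℤ) ∣ ((k:ℤ) - m) then (N:ℂ) else 0) := by
        congr 1
        exact Finset.sum_congr rfl fun k _ => by rw [geom_aux N hN]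
    _ = (1/2^(2*m)) * (N:ℂ) * ∑ k ∈ range (2*m+1),
          (if (N:ℤ) ∣ ((k:ℤ) - m) then (((2*m).choose k : ℕ):ℂ) else 0) := by
        rw [mul_assoc]
        congr 1
        rw [Finset.mul_sum]
        refine Finset.sum_congr rfl fun k _ => ?_
        split_ifs <;> ring
    _ = (1/2^(2*m)) * (N:ℂ) *
          ((((2*m).choose m : ℕ):ℂ) + 2 * ∑ p ∈ Icc 1 (m/N), (((2*m).choose (m - p*N) : ℕ):ℂ)) := by
        congr 1
        have := comb_aux m N hN hm
        have hcast := congrArg (fun n : ℕ => (n : ℂ)) this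
        push_cast at hcast ⊢
        convert hcast using 2
    _ = (2:ℂ)^((1:ℤ) - 2*m) * N *
          ((((2*m-1).choose (m-1) : ℕ):ℂ)
            + ∑ p ∈ Icc 1 (m/N), (((2*m).choose (m - p*N) : ℕ):ℂ)) := by
        rw [hch]
        have h2 : (2:ℂ)^((1:ℤ) - 2*(m:ℤ)) = 2 / 2^(2*m) := by
          have he : ((1:ℤ) - 2*(m:ℤ)) = 1 - ((2*m : ℕ) : ℤ) := by push_cast; ring
          rw [he, zpow_sub₀ (two_ne_zero), zpow_one, zpow_natCast]
        push_cast [h2]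
        ring
end
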